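/- arXiv:1802.08672 — 2 statements merged into one kernel-verified Lean document; each statement's English description precedes it below -/
import Mathlib

section
/- Let m be a mesh pattern in the class Γ, i.e. cl(m) has exactly one descent, the descent bottom is the letter 1, and sh(m) consists of all boxes southwest of the point of value 1. Then the interval [21^{(0,0),(1,0)}, m] in the mesh pattern poset is isomorphic as a poset to the interval [0, w] in the poset of finite binary words ordered by subword containment, where w is the binary word of length |m| − 1 whose i-th letter (for 2 ≤ i ≤ |m|, reindexed) is 0 if the letter i of cl(m) appears before the letter 1, and 1 otherwise. -/
/-!
# The poset of mesh patterns

A mesh pattern is a permutation of `{1, ..., len}` together with a set of shaded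
boxes in the `(len+1) × (len+1)` grid (boxes are indexed by their south-west corner,
so boxes have coordinates in `{0, ..., len} × {0, ..., len}`).

We normalise the permutation as a function `ℕ → ℕ` (using 1-based indexing) which is
`0` outside of `[1, len]`; this makes equality of mesh patterns coincide with equality
of the underlying data.
-/

structure MeshPattern where
  len : ℕ
  perm : ℕ → ℕ
  sh : Finset (ℕ × ℕ)
  perm_mem : ∀ i, 1 ≤ i → i ≤ len → 1 ≤ perm i ∧ perm i ≤ len
  perm_zero : ∀ i, i = 0 ∨ len < i → perm i = 0
  perm_inj : ∀ i j, 1 ≤ i → i ≤ len → 1 ≤ j → j ≤ len → perm i = perm j → i = j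
  perm_surj : ∀ v, 1 ≤ v → v ≤ len → ∃ i, 1 ≤ i ∧ i ≤ len ∧ perm i = v
  sh_mem : ∀ q ∈ sh, q.1 ≤ len ∧ q.2 ≤ len

namespace MeshPattern

/-- The (1-based) position of the value `v` in the underlying permutation of `m`. -/
noncomputable def pos (m : MeshPattern) (v : ℕ) : ℕ := Function.invFun m.perm v

/-- The dimension of a mesh pattern: length of the permutation plus number of shaded boxes. -/
def dim (m : MeshPattern) : ℕ := m.len + m.sh.card

/-- Given (the position map of an occurrence) `η` of `m` in `p`, the extended column
boundary map: pattern column boundary `i` (for `0 ≤ i ≤ m.len + 1`) is sent to the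
corresponding column boundary in `p`.  Boxes of `p` with first coordinate `a` satisfying
`colExt m p η i ≤ a < colExt m p η (i+1)` are exactly the boxes lying horizontally
within the region corresponding to pattern boxes with first coordinate `i`. -/
def colExt (m p : MeshPattern) (η : ℕ → ℕ) (i : ℕ) : ℕ :=
  if i = 0 then 0 else if i ≤ m.len then η i else p.len + 1

/-- The analogous extended row (value) boundary map. -/
noncomputable def valExt (m p : MeshPattern) (η : ℕ → ℕ) (j : ℕ) : ℕ :=
  if j = 0 then 0 else if j ≤ m.len then p.perm (η (m.pos j)) else p.len + 1

/-- The box `(a, b)` of `p` lies in the region `R_η(i, j)` of the box `(i, j)` of `m`. -/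
def inRegion (m p : MeshPattern) (η : ℕ → ℕ) (i j a b : ℕ) : Prop :=
  colExt m p η i ≤ a ∧ a < colExt m p η (i + 1) ∧
    valExt m p η j ≤ b ∧ b < valExt m p η (j + 1)

/-- The point of `p` at position `y` lies in the open interior of the region `R_η(i, j)`. -/
def interiorPt (m p : MeshPattern) (η : ℕ → ℕ) (i j y : ℕ) : Prop :=
  colExt m p η i < y ∧ y < colExt m p η (i + 1) ∧
    valExt m p η j < p.perm y ∧ p.perm y < valExt m p η (j + 1)

/-- `η` is an occurrence of the mesh pattern `m` in the mesh pattern `p`: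
a (normalised) strictly increasing choice of positions realising the underlying
classical pattern, such that for every shaded box of `m` the corresponding region of `p`
contains no point of `p` in its interior and consists entirely of shaded boxes of `p`. -/
structure IsOcc (m p : MeshPattern) (η : ℕ → ℕ) : Prop where
  zero : ∀ i, i = 0 ∨ m.len < i → η i = 0
  mem : ∀ i, 1 ≤ i → i ≤ m.len → 1 ≤ η i ∧ η i ≤ p.len
  mono : ∀ i j, 1 ≤ i → i < j → j ≤ m.len → η i < η j
  pattern : ∀ i j, 1 ≤ i → i ≤ m.len → 1 ≤ j → j ≤ m.len →
    (m.perm i < m.perm j ↔ p.perm (η i) < p.perm (η j))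
  no_point : ∀ q ∈ m.sh, ∀ y, 1 ≤ y → y ≤ p.len → ¬ interiorPt m p η q.1 q.2 y
  shaded : ∀ q ∈ m.sh, ∀ a b, inRegion m p η q.1 q.2 a b → (a, b) ∈ p.sh

/-- The mesh pattern poset: `m ≤ p` iff there is an occurrence of `m` in `p`. -/
instance : LE MeshPattern := ⟨fun m p => ∃ η, IsOcc m p η⟩

instance : LT MeshPattern := ⟨fun m p => m ≤ p ∧ m ≠ p⟩

/-- `b` covers `a` in the mesh pattern poset. -/
def CovByM (a b : MeshPattern) : Prop := a < b ∧ ¬ ∃ z, a < z ∧ z < b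

open Classical in
/-- The Möbius function of a (locally finite) partial order `r`, computed with a fuel
parameter: `muFuel r n a b` is the Möbius function `μ(a, b)` provided `n` is at least the
length of the longest chain from `a` to `b` (with the convention `μ(a, b) = 0` if
`¬ r a b`). -/
noncomputable def muFuel {α : Type*} (r : α → α → Prop) : ℕ → α → α → ℤ
  | 0, a, b => if a = b then 1 else 0
  | n + 1, a, b =>
      if a = b then 1
      else if r a b then - ∑ᶠ c ∈ {c | r a c ∧ r c b ∧ c ≠ b}, muFuel r n a c
      else 0

/-- The Möbius function of the mesh pattern poset.  Since every chain from `m` to `p` has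
length at most `dim p`, the fuel `dim p + 1` is sufficient, so this is the genuine Möbius
function: `mu m m = 1`, `mu m p = -∑_{m ≤ c < p} mu m c` for `m < p`, and `mu m p = 0`
when `m ≰ p`. -/
noncomputable def mu (m p : MeshPattern) : ℤ := muFuel (· ≤ ·) (p.dim + 1) m p

/-- The classical permutation poset `𝓟`, realised as the subposet of unshaded mesh
patterns (for unshaded patterns, mesh occurrence is exactly classical pattern
containment).  Its Möbius function. -/
noncomputable def muP (σ π : {m : MeshPattern // m.sh = ∅}) : ℤ :=
  muFuel (· ≤ ·) (π.1.len + 1) σ π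

/-- The mesh pattern with underlying identity permutation of length `n`
and shaded boxes `s`. -/
def ofId (n : ℕ) (s : Finset (ℕ × ℕ)) (hs : ∀ q ∈ s, q.1 ≤ n ∧ q.2 ≤ n) : MeshPattern where
  len := n
  perm := fun i => if 1 ≤ i ∧ i ≤ n then i else 0
  sh := s
  perm_mem := by intro i h1 h2; (try dsimp only); rw [if_pos ⟨h1, h2⟩]; omega
  perm_zero := by intro i h; (try dsimp only); rw [if_neg]; omega
  perm_inj := by intro i j h1 h2 h3 h4 h; (try dsimp only at h); rw [if_pos ⟨h1, h2⟩, if_pos ⟨h3, h4⟩] at h; omega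
  perm_surj := by
    intro v h1 h2; exact ⟨v, h1, h2, by (try dsimp only); rw [if_pos ⟨h1, h2⟩]⟩
  sh_mem := hs

/-- The mesh pattern with underlying decreasing permutation of length `n`
and shaded boxes `s`. -/
def ofRev (n : ℕ) (s : Finset (ℕ × ℕ)) (hs : ∀ q ∈ s, q.1 ≤ n ∧ q.2 ≤ n) : MeshPattern where
  len := n
  perm := fun i => if 1 ≤ i ∧ i ≤ n then n + 1 - i else 0
  sh := s
  perm_mem := by intro i h1 h2; (try dsimp only); rw [if_pos ⟨h1, h2⟩]; omega
  perm_zero := by intro i h; (try dsimp only); rw [if_neg]; omega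
  perm_inj := by intro i j h1 h2 h3 h4 h; (try dsimp only at h); rw [if_pos ⟨h1, h2⟩, if_pos ⟨h3, h4⟩] at h; omega
  perm_surj := by
    intro v h1 h2
    exact ⟨n + 1 - v, by omega, by omega, by (try dsimp only); rw [if_pos ⟨by omega, by omega⟩]; omega⟩
  sh_mem := hs

/-- The unshaded singleton mesh pattern `1^∅`. -/
def one0 : MeshPattern := ofId 1 ∅ (by simp)

/-- The empty mesh pattern `ε^∅`. -/
def eps0 : MeshPattern := ofId 0 ∅ (by simp)

/-- The empty mesh pattern `ε^{(0,0)}` with its single box shaded. -/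
def eps00 : MeshPattern := ofId 0 {(0, 0)} (by decide)

/-- The singleton mesh patterns `1^{(a,b)}` for `a b ∈ {0,1}`. -/
def one00 : MeshPattern := ofId 1 {(0, 0)} (by decide)
def one10 : MeshPattern := ofId 1 {(1, 0)} (by decide)
def one01 : MeshPattern := ofId 1 {(0, 1)} (by decide)
def one11 : MeshPattern := ofId 1 {(1, 1)} (by decide)

/-- The mesh pattern `21^{(0,0),(1,0)}`. -/
def pat21 : MeshPattern := ofRev 2 {(0, 0), (1, 0)} (by decide)

/-- Replace the shading of `p` by a subset `A ⊆ sh p` (same underlying permutation):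
this is the mesh pattern `(cl p)^A`. -/
def reshade (p : MeshPattern) (A : Finset (ℕ × ℕ)) (hA : A ⊆ p.sh) : MeshPattern :=
  { p with sh := A, sh_mem := fun q hq => p.sh_mem q (hA hq) }

/-- The occurrence `η` of `s` in `p` uses the shaded box `(a, b) ∈ sh p`. -/
def UsesBox (s p : MeshPattern) (η : ℕ → ℕ) (a b : ℕ) : Prop :=
  (a, b) ∈ p.sh ∧ ∃ i j, (i, j) ∈ s.sh ∧ inRegion s p η i j a b

/-- The position map of the occurrence of `p − x` in `p` avoiding the point at
position `x`. -/
def etaDel (p : MeshPattern) (x : ℕ) : ℕ → ℕ := fun i =>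
  if 1 ≤ i ∧ i ≤ p.len - 1 then (if i < x then i else i + 1) else 0

/-- The underlying permutation of the pattern obtained from `p` by deleting the point at
position `x`. -/
def delPerm (p : MeshPattern) (x : ℕ) : ℕ → ℕ := fun i =>
  if 1 ≤ i ∧ i ≤ p.len - 1 then
    (if p.perm (etaDel p x i) < p.perm x then p.perm (etaDel p x i)
     else p.perm (etaDel p x i) - 1)
  else 0

/-- `q` is the mesh pattern `p − x` obtained from `p` by deleting the point at position
`x` (where `1 ≤ x ≤ len p`): the underlying permutation is obtained by deleting that
letter, and a box of `q` is shaded exactly when the corresponding region of `p` (under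
the occurrence `etaDel p x`) is entirely shaded and contains no point of `p` in its
interior.  In particular `etaDel p x` is an occurrence of `q` in `p`. -/
def IsDeletion (p : MeshPattern) (x : ℕ) (q : MeshPattern) : Prop :=
  1 ≤ x ∧ x ≤ p.len ∧ q.len + 1 = p.len ∧ q.perm = delPerm p x ∧
    ∀ i j : ℕ, ((i, j) ∈ q.sh ↔ i ≤ q.len ∧ j ≤ q.len ∧
      (∀ a b, inRegion q p (etaDel p x) i j a b → (a, b) ∈ p.sh) ∧
      ∀ y, 1 ≤ y → y ≤ p.len → ¬ interiorPt q p (etaDel p x) i j y)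

/-- Deleting the point at position `x` of `p` (with `q = p − x`) merges shadings:
some shaded box of `q` corresponds to more than one shaded box of `p`. -/
def MergesShadings (p : MeshPattern) (x : ℕ) (q : MeshPattern) : Prop :=
  ∃ i j, (i, j) ∈ q.sh ∧ ∃ a b a' b', (a, b) ≠ (a', b') ∧ (a, b) ∈ p.sh ∧
    (a', b') ∈ p.sh ∧ inRegion q p (etaDel p x) i j a b ∧
    inRegion q p (etaDel p x) i j a' b'

/-- `f 0 ⋖ f 1 ⋖ ⋯ ⋖ f k` is a maximal chain of length `k` from `a` to `b`. -/
def IsMaxChain (a b : MeshPattern) (k : ℕ) (f : ℕ → MeshPattern) : Prop :=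
  f 0 = a ∧ f k = b ∧ ∀ i < k, CovByM (f i) (f (i + 1))

/-- Underlying permutation of the direct sum `s ⊕ t`. -/
def dsumPerm (s t : MeshPattern) : ℕ → ℕ := fun i =>
  if i ≤ s.len then s.perm i
  else if i ≤ s.len + t.len then t.perm (i - s.len) + s.len
  else 0

/-- Shading of the direct sum `s ⊕ t`: the shadings of `s` and of `t` (translated), where
boxes on the shared boundary are extended to the new boundary (north/east for boxes of
`s`, south/west for boxes of `t`). -/
def dsumSh (s t : MeshPattern) : Finset (ℕ × ℕ) :=
  s.sh ∪ t.sh.image (fun q => (q.1 + s.len, q.2 + s.len)) ∪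
    (s.sh.filter (fun q => q.2 = s.len)).biUnion
      (fun q => (Finset.range (t.len + 1)).image (fun k => (q.1, s.len + k))) ∪
    (s.sh.filter (fun q => q.1 = s.len)).biUnion
      (fun q => (Finset.range (t.len + 1)).image (fun k => (s.len + k, q.2))) ∪
    (t.sh.filter (fun q => q.2 = 0)).biUnion
      (fun q => (Finset.range (s.len + 1)).image (fun k => (q.1 + s.len, k))) ∪
    (t.sh.filter (fun q => q.1 = 0)).biUnion
      (fun q => (Finset.range (s.len + 1)).image (fun k => (k, q.2 + s.len)))

/-- `r = s ⊕ t` is the direct sum of the mesh patterns `s` and `t` (defined when the top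
right corner box of `s` and the bottom left corner box of `t` are not shaded). -/
def IsDSum (s t r : MeshPattern) : Prop :=
  (s.len, s.len) ∉ s.sh ∧ (0, 0) ∉ t.sh ∧
    r.len = s.len + t.len ∧ r.perm = dsumPerm s t ∧ r.sh = dsumSh s t

/-- A mesh pattern is indecomposable if it cannot be written as a direct sum `a ⊕ b`
with neither `a` nor `b` equal to it. -/
def Indecomposable (m : MeshPattern) : Prop :=
  ¬ ∃ s t, s ≠ m ∧ t ≠ m ∧ IsDSum s t m

/-- `SumOfList L m`: `m` is the direct sum of the list `L` of mesh patterns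
(the empty list summing to the empty pattern `ε^∅`). -/
def SumOfList : List MeshPattern → MeshPattern → Prop
  | [], m => m.len = 0 ∧ m.sh = ∅
  | [a], m => a = m
  | a :: b :: rest, m => ∃ r, SumOfList (b :: rest) r ∧ IsDSum a r m

/-- Underlying permutation of the skew sum `s ⊖ t`. -/
def sksumPerm (s t : MeshPattern) : ℕ → ℕ := fun i =>
  if i = 0 then 0
  else if i ≤ s.len then s.perm i + t.len
  else if i ≤ s.len + t.len then t.perm (i - s.len)
  else 0

/-- Shading of the skew sum `s ⊖ t` (s placed to the north west of `t`), with boxes on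
the shared boundary extended to the new boundary. -/
def sksumSh (s t : MeshPattern) : Finset (ℕ × ℕ) :=
  s.sh.image (fun q => (q.1, q.2 + t.len)) ∪ t.sh.image (fun q => (q.1 + s.len, q.2)) ∪
    (s.sh.filter (fun q => q.1 = s.len)).biUnion
      (fun q => (Finset.range (t.len + 1)).image (fun k => (s.len + k, q.2 + t.len))) ∪
    (s.sh.filter (fun q => q.2 = 0)).biUnion
      (fun q => (Finset.range (t.len + 1)).image (fun k => (q.1, k))) ∪
    (t.sh.filter (fun q => q.2 = t.len)).biUnion
      (fun q => (Finset.range (s.len + 1)).image (fun k => (q.1 + s.len, t.len + k))) ∪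
    (t.sh.filter (fun q => q.1 = 0)).biUnion
      (fun q => (Finset.range (s.len + 1)).image (fun k => (k, q.2)))

/-- `r = s ⊖ t` is the skew sum of the mesh patterns `s` and `t` (defined when the bottom
right corner box of `s` and the top left corner box of `t` are not shaded). -/
def IsSkewSum (s t r : MeshPattern) : Prop :=
  (s.len, 0) ∉ s.sh ∧ (0, t.len) ∉ t.sh ∧
    r.len = s.len + t.len ∧ r.perm = sksumPerm s t ∧ r.sh = sksumSh s t

/-- A mesh pattern is skew-indecomposable if it cannot be written as a skew sum `a ⊖ b`
with neither `a` nor `b` equal to it. -/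
def SkewIndecomposable (m : MeshPattern) : Prop :=
  ¬ ∃ s t, s ≠ m ∧ t ≠ m ∧ IsSkewSum s t m

/-- Connectivity (zig-zag of comparabilities) inside a subset `I` of the mesh pattern
poset. -/
def ConnIn (I : Set MeshPattern) (a b : MeshPattern) : Prop :=
  Relation.ReflTransGen (fun u v => u ∈ I ∧ v ∈ I ∧ (u ≤ v ∨ v ≤ u)) a b

/-- The interval `[m, p]` is strongly disconnected: its open interior has at least two
connected components each containing more than one element. -/
def StronglyDisconnectedInterval (m p : MeshPattern) : Prop :=
  ∃ a b, (m < a ∧ a < p) ∧ (m < b ∧ b < p) ∧ ¬ ConnIn {c | m < c ∧ c < p} a b ∧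
    (∃ a', (m < a' ∧ a' < p) ∧ a' ≠ a ∧ ConnIn {c | m < c ∧ c < p} a a') ∧
    (∃ b', (m < b' ∧ b' < p) ∧ b' ≠ b ∧ ConnIn {c | m < c ∧ c < p} b b')

/-- The occurrence of `m` in `m ⊕ m` (or `m ⊖ m`) as the first `|m|` points. -/
def eta1 (m : MeshPattern) : ℕ → ℕ := fun i => if 1 ≤ i ∧ i ≤ m.len then i else 0

/-- The occurrence of `m` in `m ⊕ m` (or `m ⊖ m`) as the last `|m|` points. -/
def eta2 (m : MeshPattern) : ℕ → ℕ := fun i => if 1 ≤ i ∧ i ≤ m.len then i + m.len else 0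

/-- `i` (with `2 ≤ i ≤ len`) is the position of an adjacency tail: the letter at
position `i` differs by one from the letter at position `i - 1`. -/
def IsAdjTail (m : MeshPattern) (i : ℕ) : Prop :=
  2 ≤ i ∧ i ≤ m.len ∧ (m.perm i = m.perm (i - 1) + 1 ∨ m.perm (i - 1) = m.perm i + 1)

open Classical in
/-- `adj(cl m)`: the number of adjacency tails of the underlying permutation of `m`. -/
noncomputable def adjCount (m : MeshPattern) : ℕ :=
  ((Finset.range (m.len + 1)).filter (fun i => IsAdjTail m i)).card

/-- The total number of mesh patterns of length `n`. -/
def Tcount (n : ℕ) : ℕ := n.factorial * 2 ^ ((n + 1) ^ 2)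

end MeshPattern

/-- Binary words, partially ordered by (not necessarily contiguous) subword containment:
the poset `𝓦`. -/
structure Word where
  toList : List Bool

instance : LE Word := ⟨fun u w => u.toList.Sublist w.toList⟩

/-- The binary word associated to a mesh pattern `m` in the class `Γ`: it has length
`|m| - 1`, and for each letter `i` with `2 ≤ i ≤ |m|` the corresponding entry is
`false` (i.e. `0`) if the letter `i` appears before the letter `1` in `cl m`,
and `true` (i.e. `1`) otherwise. -/
noncomputable def MeshPattern.wordOf (m : MeshPattern) : List Bool :=
  (List.range (m.len - 1)).map (fun k => if m.pos (k + 2) < m.pos 1 then false else true)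

namespace MeshPattern
def falseIdx (u : List Bool) : List ℕ := (List.range u.length).filter (fun j => !u.getD j true)
def trueIdx (u : List Bool) : List ℕ := (List.range u.length).filter (fun j => u.getD j true)
def dOf (u : List Bool) : ℕ := (falseIdx u).length
def permList (u : List Bool) : List ℕ :=
  (falseIdx u).map (· + 2) ++ 1 :: (trueIdx u).map (· + 2)

lemma permList_perm (u : List Bool) :
    permList u |>.Perm <| (List.range (u.length + 1)).map (· + 1) := by
  have h1 : falseIdx u ++ trueIdx u |>.Perm <| List.range u.length := by
    simpa [falseIdx, trueIdx] using
      List.filter_append_perm (fun j => !u.getD j true) (List.range u.length)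
  have h2 : permList u |>.Perm <| 1 :: (falseIdx u ++ trueIdx u).map (· + 2) := by
    simpa [permList, List.map_append] using
      (List.perm_middle (a := 1) (l₁ := (falseIdx u).map (· + 2))
        (l₂ := (trueIdx u).map (· + 2)))
  refine h2.trans ?_
  have h3 : ((falseIdx u ++ trueIdx u).map (· + 2)) |>.Perm <| (List.range u.length).map (· + 2) :=
    h1.map _
  refine (h3.cons 1).trans ?_
  have : (List.range (u.length + 1)).map (· + 1)
      = 1 :: (List.range u.length).map (· + 2) := by
    rw [List.range_succ_eq_map]
    simp only [List.map_cons, List.map_map]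
    refine congrArg (1 :: ·) ?_
    exact List.map_congr_left (fun a _ => by show a.succ + 1 = a + 2; omega)
  rw [this]

lemma length_permList (u : List Bool) : (permList u).length = u.length + 1 := by
  simpa using (permList_perm u).length_eq

lemma mem_permList {u : List Bool} {v : ℕ} :
    v ∈ permList u ↔ 1 ≤ v ∧ v ≤ u.length + 1 := by
  rw [(permList_perm u).mem_iff]
  simp only [List.mem_map, List.mem_range]
  constructor
  · rintro ⟨a, ha, rfl⟩; omega
  · rintro ⟨h1, h2⟩; exact ⟨v - 1, by omega, by omega⟩

lemma nodup_permList (u : List Bool) : (permList u).Nodup :=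
  (permList_perm u).nodup_iff.mpr (List.nodup_range.map fun a b h => by omega)

def gammaOf (u : List Bool) : MeshPattern where
  len := u.length + 1
  perm := fun i => if 1 ≤ i ∧ i ≤ u.length + 1 then (permList u).getD (i - 1) 0 else 0
  sh := (Finset.range (dOf u + 1)).image (fun i => (i, 0))
  perm_mem := by
    intro i h1 h2
    rw [if_pos ⟨h1, h2⟩]
    have hlt : i - 1 < (permList u).length := by rw [length_permList]; omega
    rw [List.getD_eq_getElem _ _ hlt]
    exact mem_permList.mp (List.getElem_mem hlt)
  sh_mem := by
    intro q hq
    simp only [Finset.mem_image, Finset.mem_range] at hq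
    obtain ⟨i, hi, rfl⟩ := hq
    constructor
    · show i ≤ u.length + 1
      have : dOf u ≤ u.length := by
        simpa [dOf, falseIdx] using (List.length_filter_le _ (List.range u.length)).trans (by simp)
      omega
    · exact Nat.zero_le _
  perm_zero := by intro i h; rw [if_neg]; omega
  perm_inj := by
    intro i j h1 h2 h3 h4 h
    rw [if_pos ⟨h1, h2⟩, if_pos ⟨h3, h4⟩] at h
    have hi : i - 1 < (permList u).length := by rw [length_permList]; omega
    have hj : j - 1 < (permList u).length := by rw [length_permList]; omega
    rw [List.getD_eq_getElem _ _ hi, List.getD_eq_getElem _ _ hj] at h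
    have := ((nodup_permList u).getElem_inj_iff).mp h
    omega
  perm_surj := by
    intro v h1 h2
    obtain ⟨k, hk, hkv⟩ := List.mem_iff_getElem.mp (mem_permList.mpr ⟨h1, h2⟩)
    refine ⟨k + 1, by omega, by rw [length_permList] at hk; omega, ?_⟩
    rw [if_pos ⟨by omega, by rw [length_permList] at hk; omega⟩]
    rw [show k + 1 - 1 = k from rfl, List.getD_eq_getElem _ _ hk]
    exact hkv

lemma dOf_le (u : List Bool) : dOf u ≤ u.length := by
  simpa [dOf, falseIdx] using (List.length_filter_le _ (List.range u.length)).trans (by simp)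

lemma gamma_len (u : List Bool) : (gammaOf u).len = u.length + 1 := rfl

lemma gamma_perm_getD {u : List Bool} {i : ℕ} (h1 : 1 ≤ i) (h2 : i ≤ u.length + 1) :
    (gammaOf u).perm i = (permList u).getD (i - 1) 0 := by
  show (if 1 ≤ i ∧ i ≤ u.length + 1 then (permList u).getD (i-1) 0 else 0) = _
  rw [if_pos ⟨h1, h2⟩]

lemma falseIdx_sorted (u : List Bool) : (falseIdx u).Pairwise (· < ·) :=
  List.pairwise_lt_range.sublist List.filter_sublist

lemma trueIdx_sorted (u : List Bool) : (trueIdx u).Pairwise (· < ·) :=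
  List.pairwise_lt_range.sublist List.filter_sublist

lemma mem_falseIdx {u : List Bool} {j : ℕ} :
    j ∈ falseIdx u ↔ j < u.length ∧ u.getD j true = false := by
  simp [falseIdx, List.mem_filter]

lemma mem_trueIdx {u : List Bool} {j : ℕ} :
    j ∈ trueIdx u ↔ j < u.length ∧ u.getD j true = true := by
  simp [trueIdx, List.mem_filter]

lemma dOf_def (u : List Bool) : dOf u = (falseIdx u).length := rfl

lemma lengths_idx (u : List Bool) : dOf u + (trueIdx u).length = u.length := by
  have h1 := length_permList u
  rw [permList] at h1
  simp only [List.length_append, List.length_map, List.length_cons] at h1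
  rw [dOf_def]
  omega

lemma gamma_perm_false {u : List Bool} {i : ℕ} (h1 : 1 ≤ i) (h2 : i ≤ dOf u) :
    (gammaOf u).perm i = (falseIdx u).getD (i - 1) 0 + 2 := by
  have hd := dOf_le u
  have hdf := dOf_def u
  have hi' : i - 1 < (falseIdx u).length := by omega
  rw [gamma_perm_getD h1 (by omega), permList,
    List.getD_append _ _ _ _ (by simpa using hi'),
    List.getD_eq_getElem _ _ (by simpa using hi'), List.getElem_map,
    ← List.getD_eq_getElem _ _ hi']

lemma gamma_perm_mid (u : List Bool) : (gammaOf u).perm (dOf u + 1) = 1 := by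
  have hd := dOf_le u
  have hdf := dOf_def u
  rw [gamma_perm_getD (by omega) (by omega), permList,
    List.getD_append_right _ _ _ _ (by simp; omega)]
  rw [hdf]
  simp

lemma gamma_perm_true {u : List Bool} {i : ℕ} (h1 : dOf u + 2 ≤ i) (h2 : i ≤ u.length + 1) :
    (gammaOf u).perm i = (trueIdx u).getD (i - dOf u - 2) 0 + 2 := by
  have hdf := dOf_def u
  have hlen := lengths_idx u
  have ht : i - dOf u - 2 < (trueIdx u).length := by omega
  rw [gamma_perm_getD (by omega) h2, permList,
    List.getD_append_right _ _ _ _ (by simp; omega)]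
  have he : i - 1 - ((falseIdx u).map (· + 2)).length = (i - dOf u - 2) + 1 := by
    simp; omega
  rw [he, List.getD_cons_succ,
    List.getD_eq_getElem _ _ (by simpa using ht), List.getElem_map,
    ← List.getD_eq_getElem _ _ ht]


lemma perm_pos_eq (m : MeshPattern) {v : ℕ} (h1 : 1 ≤ v) (h2 : v ≤ m.len) :
    m.perm (m.pos v) = v := by
  obtain ⟨i, _, _, hi3⟩ := m.perm_surj v h1 h2
  exact Function.invFun_eq ⟨i, hi3⟩

lemma pos_mem (m : MeshPattern) {v : ℕ} (h1 : 1 ≤ v) (h2 : v ≤ m.len) :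
    1 ≤ m.pos v ∧ m.pos v ≤ m.len := by
  have h := m.perm_pos_eq h1 h2
  by_contra hc
  push_neg at hc
  have hz : m.pos v = 0 ∨ m.len < m.pos v := by
    rcases Nat.eq_zero_or_pos (m.pos v) with h0 | h0
    · exact Or.inl h0
    · exact Or.inr (hc h0)
  rw [m.perm_zero _ hz] at h; omega

lemma pos_perm (m : MeshPattern) {i : ℕ} (h1 : 1 ≤ i) (h2 : i ≤ m.len) :
    m.pos (m.perm i) = i := by
  have hv := m.perm_mem i h1 h2
  have h3 := m.perm_pos_eq hv.1 hv.2
  have h4 := m.pos_mem hv.1 hv.2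
  exact m.perm_inj _ _ h4.1 h4.2 h1 h2 h3

lemma pos_eq_of (m : MeshPattern) {i v : ℕ} (h1 : 1 ≤ i) (h2 : i ≤ m.len)
    (h : m.perm i = v) : m.pos v = i := by subst h; exact m.pos_perm h1 h2


lemma gamma_mono_false {u : List Bool} {i j : ℕ} (h1 : 1 ≤ i) (hij : i < j) (h2 : j ≤ dOf u) :
    (gammaOf u).perm i < (gammaOf u).perm j := by
  have hdf := dOf_def u
  rw [gamma_perm_false h1 (by omega), gamma_perm_false (by omega) h2]
  have hi : i - 1 < (falseIdx u).length := by omega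
  have hj : j - 1 < (falseIdx u).length := by omega
  rw [List.getD_eq_getElem _ _ hi, List.getD_eq_getElem _ _ hj]
  have := List.pairwise_iff_getElem.mp (falseIdx_sorted u) _ _ hi hj (by omega)
  omega

lemma gamma_mono_true {u : List Bool} {i j : ℕ} (h1 : dOf u + 1 ≤ i) (hij : i < j)
    (h2 : j ≤ u.length + 1) : (gammaOf u).perm i < (gammaOf u).perm j := by
  have hlen := lengths_idx u
  rcases Nat.eq_or_lt_of_le h1 with heq | hi
  · rw [← heq, gamma_perm_mid, gamma_perm_true (by omega) h2]; omega
  · rw [gamma_perm_true (by omega) (by omega), gamma_perm_true (by omega) h2]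
    have hti : i - dOf u - 2 < (trueIdx u).length := by omega
    have htj : j - dOf u - 2 < (trueIdx u).length := by omega
    rw [List.getD_eq_getElem _ _ hti, List.getD_eq_getElem _ _ htj]
    have := List.pairwise_iff_getElem.mp (trueIdx_sorted u) _ _ hti htj (by omega)
    omega

lemma gamma_letter_false {u : List Bool} {i : ℕ} (h1 : 1 ≤ i) (h2 : i ≤ dOf u) :
    2 ≤ (gammaOf u).perm i ∧ (gammaOf u).perm i ≤ u.length + 1 ∧
      u.getD ((gammaOf u).perm i - 2) true = false := by
  have hdf := dOf_def u
  have hi : i - 1 < (falseIdx u).length := by omega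
  rw [gamma_perm_false h1 h2, List.getD_eq_getElem _ _ hi]
  have hm := mem_falseIdx.mp (List.getElem_mem hi)
  exact ⟨by omega, by omega, by simpa using hm.2⟩

lemma gamma_letter_true {u : List Bool} {i : ℕ} (h1 : dOf u + 2 ≤ i) (h2 : i ≤ u.length + 1) :
    2 ≤ (gammaOf u).perm i ∧ (gammaOf u).perm i ≤ u.length + 1 ∧
      u.getD ((gammaOf u).perm i - 2) true = true := by
  have hdf := dOf_def u
  have hlen := lengths_idx u
  have hi : i - dOf u - 2 < (trueIdx u).length := by omega
  rw [gamma_perm_true h1 h2, List.getD_eq_getElem _ _ hi]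
  have hm := mem_trueIdx.mp (List.getElem_mem hi)
  exact ⟨by omega, by omega, by simpa using hm.2⟩

lemma gamma_pos_one (u : List Bool) : (gammaOf u).pos 1 = dOf u + 1 := by
  have hd := dOf_le u
  exact (gammaOf u).pos_eq_of (by omega)
    (by show dOf u + 1 ≤ u.length + 1; omega) (gamma_perm_mid u)

lemma gamma_pos_mem {u : List Bool} {v : ℕ} (h1 : 1 ≤ v) (h2 : v ≤ u.length + 1) :
    1 ≤ (gammaOf u).pos v ∧ (gammaOf u).pos v ≤ u.length + 1 :=
  (gammaOf u).pos_mem h1 h2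

lemma gamma_pos_false {u : List Bool} {v : ℕ} (h1 : 2 ≤ v) (h2 : v ≤ u.length + 1) :
    (gammaOf u).pos v ≤ dOf u ↔ u.getD (v - 2) true = false := by
  have hp := gamma_pos_mem (u := u) (v := v) (by omega) h2
  have hperm := (gammaOf u).perm_pos_eq (v := v) (by omega) h2
  constructor
  · intro h
    have := gamma_letter_false (u := u) (i := (gammaOf u).pos v) hp.1 h
    rw [hperm] at this; exact this.2.2
  · intro h
    by_contra hc
    push_neg at hc
    rcases Nat.eq_or_lt_of_le hc with heq | hgt
    · rw [← heq, gamma_perm_mid] at hperm; omega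
    · have := gamma_letter_true (u := u) (i := (gammaOf u).pos v) (by omega) hp.2
      rw [hperm, h] at this
      exact Bool.false_ne_true this.2.2

lemma gamma_pos_true {u : List Bool} {v : ℕ} (h1 : 2 ≤ v) (h2 : v ≤ u.length + 1) :
    dOf u + 2 ≤ (gammaOf u).pos v ↔ u.getD (v - 2) true = true := by
  have hp := gamma_pos_mem (u := u) (v := v) (by omega) h2
  have hperm := (gammaOf u).perm_pos_eq (v := v) (by omega) h2
  have hne : (gammaOf u).pos v ≠ dOf u + 1 := by
    intro heq
    rw [heq, gamma_perm_mid] at hperm; omega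
  have hff := gamma_pos_false h1 h2
  cases hu : u.getD (v - 2) true
  · simp only [hu, Bool.false_eq_true, iff_false]
    have := hff.mpr hu; omega
  · simp only [hu, iff_true]
    have : ¬ (gammaOf u).pos v ≤ dOf u := fun hle => by
      rw [hff.mp hle] at hu; exact Bool.false_ne_true hu
    omega

lemma wordOf_gamma (u : List Bool) : (gammaOf u).wordOf = u := by
  unfold MeshPattern.wordOf
  rw [gamma_len]
  simp only [Nat.add_sub_cancel]
  apply List.ext_getElem
  · simp
  · intro k h1 h2
    simp only [List.getElem_map, List.getElem_range]
    rw [gamma_pos_one]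
    have hk : k < u.length := h2
    have hgd : u.getD k true = u[k] := List.getD_eq_getElem _ _ hk
    cases hu : u[k]
    · rw [if_pos]
      have := (gamma_pos_false (u := u) (v := k + 2) (by omega) (by omega)).mpr
        (by show u.getD k true = false; rw [hgd]; exact hu)
      omega
    · rw [if_neg]
      have := (gamma_pos_true (u := u) (v := k + 2) (by omega) (by omega)).mpr
        (by show u.getD k true = true; rw [hgd]; exact hu)
      omega

lemma chain_lt {f : ℕ → ℕ} {a b : ℕ} (h : ∀ i, a ≤ i → i < b → f i < f (i + 1)) :
    ∀ {i j}, a ≤ i → i < j → j ≤ b → f i < f j := by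
  intro i j hi hij hj
  induction j with
  | zero => omega
  | succ k ih =>
    rcases Nat.lt_or_ge i k with h1 | h2
    · exact (ih h1 (by omega)).trans (h k (by omega) (by omega))
    · have hik : i = k := by omega
      subst hik; exact h i hi (by omega)

/-- `c` is a Γ-pattern with descent position `d`. -/
def IsGamma (c : MeshPattern) (d : ℕ) : Prop :=
  1 ≤ d ∧ d < c.len ∧ c.perm (d + 1) = 1 ∧
    (∀ i, 1 ≤ i → i < c.len → i ≠ d → c.perm i < c.perm (i + 1)) ∧
    c.sh = (Finset.range (d + 1)).image (fun i => (i, 0))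

namespace IsGamma

variable {c : MeshPattern} {d : ℕ} (hG : IsGamma c d)
include hG

lemma mono1 {i j : ℕ} (ha : 1 ≤ i) (hb : i < j) (hc : j ≤ d) : c.perm i < c.perm j := by
  have hd1 := hG.1; have hd2 := hG.2.1
  exact chain_lt (a := 1) (b := d)
    (fun i hi hlt => hG.2.2.2.1 i hi (by omega) (by omega)) ha hb hc

lemma mono2 {i j : ℕ} (ha : d + 1 ≤ i) (hb : i < j) (hc : j ≤ c.len) : c.perm i < c.perm j := by
  have hd1 := hG.1; have hd2 := hG.2.1
  exact chain_lt (a := d + 1) (b := c.len)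
    (fun i hi hlt => hG.2.2.2.1 i (by omega) (by omega) (by omega)) ha hb hc

lemma pos_one : c.pos 1 = d + 1 := by
  have hd1 := hG.1; have hd2 := hG.2.1
  exact c.pos_eq_of (by omega) (by omega) hG.2.2.1

lemma ge2 {i : ℕ} (h1 : 1 ≤ i) (h2 : i ≤ c.len) (h3 : i ≠ d + 1) : 2 ≤ c.perm i := by
  have hd1 := hG.1; have hd2 := hG.2.1
  have hm := c.perm_mem i h1 h2
  rcases Nat.lt_or_ge (c.perm i) 2 with h | h
  · exfalso
    have : c.perm i = 1 := by omega
    have := c.perm_inj i (d + 1) h1 h2 (by omega) (by omega) (this.trans hG.2.2.1.symm)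
    omega
  · exact h

end IsGamma

lemma wordOf_length (c : MeshPattern) : c.wordOf.length = c.len - 1 := by
  simp [MeshPattern.wordOf]

lemma wordOf_getD (c : MeshPattern) {k : ℕ} (hk : k < c.len - 1) :
    c.wordOf.getD k true = (if c.pos (k + 2) < c.pos 1 then false else true) := by
  unfold MeshPattern.wordOf
  rw [List.getD_eq_getElem _ _ (by simpa using hk)]
  simp only [List.getElem_map, List.getElem_range]

lemma list_eq_of_sorted_mem {l1 l2 : List ℕ} (s1 : l1.Pairwise (· < ·))
    (s2 : l2.Pairwise (· < ·)) (h : ∀ x, x ∈ l1 ↔ x ∈ l2) : l1 = l2 := by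
  refine List.Perm.eq_of_pairwise' (r := (· ≤ ·)) (s1.imp le_of_lt) (s2.imp le_of_lt) ?_
  exact (List.perm_ext_iff_of_nodup (List.Pairwise.imp ne_of_lt s1)
    (List.Pairwise.imp ne_of_lt s2)).mpr h

namespace IsGamma

variable {c : MeshPattern} {d : ℕ} (hG : IsGamma c d)
include hG

lemma falseIdx_eq : falseIdx c.wordOf = (List.range d).map (fun j => c.perm (j + 1) - 2) := by
  have hd1 := hG.1; have hd2 := hG.2.1
  have hn : 2 ≤ c.len := by omega
  have hul : c.wordOf.length = c.len - 1 := wordOf_length c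
  apply list_eq_of_sorted_mem (falseIdx_sorted _)
  · rw [List.pairwise_iff_getElem]
    intro i j hi hj hij
    simp only [List.getElem_map, List.getElem_range]
    simp only [List.length_map, List.length_range] at hi hj
    have h2i := hG.ge2 (i := i + 1) (by omega) (by omega) (by omega)
    have h2j := hG.ge2 (i := j + 1) (by omega) (by omega) (by omega)
    have := hG.mono1 (i := i + 1) (j := j + 1) (by omega) (by omega) (by omega)
    omega
  · intro x
    rw [mem_falseIdx]
    simp only [List.mem_map, List.mem_range]
    constructor
    · rintro ⟨hx, hfal⟩
      rw [wordOf_getD c (by omega), hG.pos_one] at hfal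
      have hpos : c.pos (x + 2) ≤ d := by
        by_contra hc
        rw [if_neg (by omega)] at hfal
        exact Bool.true_eq_false.mp hfal
      have hp := c.pos_mem (v := x + 2) (by omega) (by omega)
      refine ⟨c.pos (x + 2) - 1, by omega, ?_⟩
      rw [show c.pos (x + 2) - 1 + 1 = c.pos (x + 2) from by omega,
        c.perm_pos_eq (by omega) (by omega)]
      omega
    · rintro ⟨j, hj, rfl⟩
      have h2 := hG.ge2 (i := j + 1) (by omega) (by omega) (by omega)
      have hm := c.perm_mem (j + 1) (by omega) (by omega)
      have hpp : c.pos (c.perm (j + 1)) = j + 1 := c.pos_perm (by omega) (by omega)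
      constructor
      · omega
      · rw [wordOf_getD c (by omega), hG.pos_one,
          show c.perm (j + 1) - 2 + 2 = c.perm (j + 1) from by omega, hpp, if_pos (by omega)]

lemma trueIdx_eq :
    trueIdx c.wordOf = (List.range (c.len - d - 1)).map (fun j => c.perm (d + 2 + j) - 2) := by
  have hd1 := hG.1; have hd2 := hG.2.1
  have hn : 2 ≤ c.len := by omega
  have hul : c.wordOf.length = c.len - 1 := wordOf_length c
  apply list_eq_of_sorted_mem (trueIdx_sorted _)
  · rw [List.pairwise_iff_getElem]
    intro i j hi hj hij
    simp only [List.getElem_map, List.getElem_range]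
    simp only [List.length_map, List.length_range] at hi hj
    have h2i := hG.ge2 (i := d + 2 + i) (by omega) (by omega) (by omega)
    have h2j := hG.ge2 (i := d + 2 + j) (by omega) (by omega) (by omega)
    have := hG.mono2 (i := d + 2 + i) (j := d + 2 + j) (by omega) (by omega) (by omega)
    omega
  · intro x
    rw [mem_trueIdx]
    simp only [List.mem_map, List.mem_range]
    constructor
    · rintro ⟨hx, htru⟩
      rw [wordOf_getD c (by omega), hG.pos_one] at htru
      have hpos : ¬ c.pos (x + 2) < d + 1 := by
        by_contra hc
        rw [if_pos (by omega)] at htru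
        exact Bool.false_ne_true htru
      have hp := c.pos_mem (v := x + 2) (by omega) (by omega)
      have hne : c.pos (x + 2) ≠ d + 1 := by
        intro heq
        have := c.perm_pos_eq (v := x + 2) (by omega) (by omega)
        rw [heq, hG.2.2.1] at this; omega
      refine ⟨c.pos (x + 2) - d - 2, by omega, ?_⟩
      rw [show d + 2 + (c.pos (x + 2) - d - 2) = c.pos (x + 2) from by omega,
        c.perm_pos_eq (by omega) (by omega)]
      omega
    · rintro ⟨j, hj, rfl⟩
      have h2 := hG.ge2 (i := d + 2 + j) (by omega) (by omega) (by omega)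
      have hm := c.perm_mem (d + 2 + j) (by omega) (by omega)
      have hpp : c.pos (c.perm (d + 2 + j)) = d + 2 + j := c.pos_perm (by omega) (by omega)
      constructor
      · omega
      · rw [wordOf_getD c (by omega), hG.pos_one,
          show c.perm (d + 2 + j) - 2 + 2 = c.perm (d + 2 + j) from by omega, hpp,
          if_neg (by omega)]

lemma dOf_eq : dOf c.wordOf = d := by
  rw [dOf_def, hG.falseIdx_eq]
  simp

end IsGamma

lemma meshPattern_ext {c1 c2 : MeshPattern} (h1 : c1.len = c2.len)
    (h2 : c1.perm = c2.perm) (h3 : c1.sh = c2.sh) : c1 = c2 := by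
  cases c1; cases c2; simp_all

lemma IsGamma.gamma_eq {c : MeshPattern} {d : ℕ} (hG : IsGamma c d) :
    gammaOf c.wordOf = c := by
  have hd1 := hG.1; have hd2 := hG.2.1
  have hn : 2 ≤ c.len := by omega
  have hul : c.wordOf.length = c.len - 1 := wordOf_length c
  have hd := hG.dOf_eq
  have hlen : (gammaOf c.wordOf).len = c.len := by rw [gamma_len]; omega
  apply meshPattern_ext hlen _ (by rw [show (gammaOf c.wordOf).sh
      = (Finset.range (dOf c.wordOf + 1)).image (fun i => (i, 0)) from rfl, hd, hG.2.2.2.2])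
  funext i
  rcases Nat.lt_or_ge i 1 with hi0 | hi1
  · rw [(gammaOf _).perm_zero i (by omega), c.perm_zero i (by omega)]
  rcases Nat.lt_or_ge c.len i with hiL | hiL
  · rw [(gammaOf _).perm_zero i (by rw [hlen]; omega), c.perm_zero i (by omega)]
  rcases Nat.lt_or_ge i (d + 1) with hid | hid
  · -- false block
    have h2 := hG.ge2 (i := i) hi1 hiL (by omega)
    rw [gamma_perm_false (by omega) (by omega), hG.falseIdx_eq]
    rw [List.getD_eq_getElem _ _ (by simp; omega)]
    simp only [List.getElem_map, List.getElem_range]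
    rw [show i - 1 + 1 = i from by omega]
    omega
  rcases Nat.eq_or_lt_of_le hid with hmid | hgt
  · rw [← hmid, ← hd, gamma_perm_mid, hd]
    exact hG.2.2.1.symm
  · -- true block
    have h2 := hG.ge2 (i := i) hi1 hiL (by omega)
    rw [gamma_perm_true (by omega) (by omega), hG.trueIdx_eq, hd]
    rw [List.getD_eq_getElem _ _ (by simp; omega)]
    simp only [List.getElem_map, List.getElem_range]
    rw [show d + 2 + (i - d - 2) = i from by omega]
    omega

lemma gamma_sh_mem {u : List Bool} {a b : ℕ} :
    (a, b) ∈ (gammaOf u).sh ↔ a ≤ dOf u ∧ b = 0 := by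
  show (a, b) ∈ (Finset.range (dOf u + 1)).image (fun i => (i, 0)) ↔ _
  simp only [Finset.mem_image, Finset.mem_range, Prod.mk.injEq]
  constructor
  · rintro ⟨i, hi, rfl, rfl⟩; omega
  · rintro ⟨h1, rfl⟩; exact ⟨a, by omega, rfl, rfl⟩

/-- Position-monotonicity within the before-block of a Γ pattern. -/
lemma gamma_pos_lt_false {v : List Bool} {a b : ℕ} (h1 : 1 ≤ a) (h2 : a < b)
    (h3 : b ≤ v.length + 1) (ha : (gammaOf v).pos a ≤ dOf v) (hb : (gammaOf v).pos b ≤ dOf v) :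
    (gammaOf v).pos a < (gammaOf v).pos b := by
  have hL : (gammaOf v).len = v.length + 1 := gamma_len v
  have hpa := gamma_pos_mem (u := v) (v := a) h1 (by omega)
  have hpb := gamma_pos_mem (u := v) (v := b) (by omega) h3
  have hea := (gammaOf v).perm_pos_eq (v := a) h1 (by omega)
  have heb := (gammaOf v).perm_pos_eq (v := b) (by omega) (by omega)
  rcases Nat.lt_trichotomy ((gammaOf v).pos a) ((gammaOf v).pos b) with h | h | h
  · exact h
  · exfalso
    rw [h] at hea
    omega
  · exfalso
    have := gamma_mono_false (u := v) hpb.1 h ha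
    rw [hea, heb] at this
    omega

/-- Position-monotonicity within the (weak) after-block of a Γ pattern. -/
lemma gamma_pos_lt_true {v : List Bool} {a b : ℕ} (h1 : 1 ≤ a) (h2 : a < b)
    (h3 : b ≤ v.length + 1) (ha : dOf v + 1 ≤ (gammaOf v).pos a)
    (hb : dOf v + 1 ≤ (gammaOf v).pos b) :
    (gammaOf v).pos a < (gammaOf v).pos b := by
  have hL : (gammaOf v).len = v.length + 1 := gamma_len v
  have hpa := gamma_pos_mem (u := v) (v := a) h1 (by omega)
  have hpb := gamma_pos_mem (u := v) (v := b) (by omega) h3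
  have hea := (gammaOf v).perm_pos_eq (v := a) h1 (by omega)
  have heb := (gammaOf v).perm_pos_eq (v := b) (by omega) (by omega)
  rcases Nat.lt_trichotomy ((gammaOf v).pos a) ((gammaOf v).pos b) with h | h | h
  · exact h
  · exfalso
    rw [h] at hea
    omega
  · exfalso
    have := gamma_mono_true (u := v) hb h (by omega)
    rw [hea, heb] at this
    omega

lemma gamma_le_of_sublist {u v : List Bool} (hsub : u.Sublist v) :
    gammaOf u ≤ gammaOf v := by
  classical
  obtain ⟨f, hf⟩ := List.sublist_iff_exists_fin_orderEmbedding_get_eq.mp hsub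
  have hdu := dOf_le u; have hdv := dOf_le v
  set g := gammaOf u with hg
  set h := gammaOf v with hh
  -- the value map
  set φ : ℕ → ℕ := fun k =>
    if k = 1 then 1
    else if hk : 2 ≤ k ∧ k ≤ u.length + 1 then (f ⟨k - 2, by omega⟩ : ℕ) + 2 else 0 with hφ
  have hφ1 : φ 1 = 1 := by simp [hφ]
  have hφ2 : ∀ k, 2 ≤ k → k ≤ u.length + 1 →
      2 ≤ φ k ∧ φ k ≤ v.length + 1 ∧ v.getD (φ k - 2) true = u.getD (k - 2) true := by
    intro k h2 hk
    have hk2 : k - 2 < u.length := by omega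
    have hval : φ k = (f ⟨k - 2, hk2⟩ : ℕ) + 2 := by
      simp only [hφ]
      rw [if_neg (by omega), dif_pos ⟨h2, hk⟩]
    have hfb := (f ⟨k - 2, hk2⟩).2
    refine ⟨by omega, by omega, ?_⟩
    rw [hval]
    have := hf ⟨k - 2, hk2⟩
    simp only [List.get_eq_getElem] at this
    rw [List.getD_eq_getElem _ _ (by omega : k - 2 < u.length),
      List.getD_eq_getElem _ _ (show (f ⟨k - 2, hk2⟩ : ℕ) + 2 - 2 < v.length by omega)]
    simp only [Nat.add_sub_cancel]
    exact this.symm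
  have hφmono : ∀ a b, 1 ≤ a → a < b → b ≤ u.length + 1 → φ a < φ b := by
    intro a b ha hab hb
    have hb2 : 2 ≤ b := by omega
    have hbv : φ b = (f ⟨b - 2, by omega⟩ : ℕ) + 2 := by
      simp only [hφ]; rw [if_neg (by omega), dif_pos ⟨hb2, hb⟩]
    rcases Nat.eq_or_lt_of_le ha with ha1 | ha2
    · rw [← ha1, hφ1, hbv]; omega
    · have hav : φ a = (f ⟨a - 2, by omega⟩ : ℕ) + 2 := by
        simp only [hφ]; rw [if_neg (by omega), dif_pos ⟨by omega, by omega⟩]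
      rw [hav, hbv]
      have := f.strictMono (show (⟨a - 2, by omega⟩ : Fin u.length) < ⟨b - 2, by omega⟩ by
        simp [Fin.lt_def]; omega)
      simp only [Fin.lt_def] at this
      omega
  -- the occurrence
  have hgl : g.len = u.length + 1 := rfl
  have hhl : h.len = v.length + 1 := rfl
  have hφrange : ∀ k, 1 ≤ k → k ≤ u.length + 1 → 1 ≤ φ k ∧ φ k ≤ v.length + 1 := by
    intro k h1 h2
    rcases Nat.eq_or_lt_of_le h1 with e | l
    · rw [← e, hφ1]; omega
    · have := hφ2 k (by omega) h2; omega
  set η : ℕ → ℕ := fun i => if 1 ≤ i ∧ i ≤ u.length + 1 then h.pos (φ (g.perm i)) else 0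
    with hη
  have hηval : ∀ i, 1 ≤ i → i ≤ u.length + 1 → η i = h.pos (φ (g.perm i)) := fun i a b => by
    simp only [hη]; rw [if_pos ⟨a, b⟩]
  have hmem : ∀ i, 1 ≤ i → i ≤ u.length + 1 → 1 ≤ η i ∧ η i ≤ v.length + 1 := by
    intro i a b
    rw [hηval i a b]
    have hpm := g.perm_mem i a b
    have hr := hφrange _ hpm.1 hpm.2
    exact h.pos_mem hr.1 hr.2
  have hval : ∀ i, 1 ≤ i → i ≤ u.length + 1 → h.perm (η i) = φ (g.perm i) := by
    intro i a b
    rw [hηval i a b]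
    have hpm := g.perm_mem i a b
    have hr := hφrange _ hpm.1 hpm.2
    exact h.perm_pos_eq hr.1 hr.2
  have hblock : ∀ i, 1 ≤ i → i ≤ u.length + 1 →
      (i ≤ dOf u → η i ≤ dOf v) ∧ (i = dOf u + 1 → η i = dOf v + 1) ∧
        (dOf u + 2 ≤ i → dOf v + 2 ≤ η i) := by
    intro i a b
    rw [hηval i a b]
    refine ⟨?_, ?_, ?_⟩
    · intro hi
      have hlf := gamma_letter_false (u := u) a hi
      have hl2 := hφ2 (g.perm i) hlf.1 hlf.2.1
      exact (gamma_pos_false hl2.1 hl2.2.1).mpr (hl2.2.2.trans hlf.2.2)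
    · intro hi
      rw [hi, show (gammaOf u).perm (dOf u + 1) = 1 from gamma_perm_mid u, hφ1, gamma_pos_one]
    · intro hi
      have hlt := gamma_letter_true (u := u) hi b
      have hl2 := hφ2 (g.perm i) hlt.1 hlt.2.1
      exact (gamma_pos_true hl2.1 hl2.2.1).mpr (hl2.2.2.trans hlt.2.2)
  have hmono : ∀ i j, 1 ≤ i → i < j → j ≤ u.length + 1 → η i < η j := by
    intro i j hi hij hj
    have hbi := hblock i hi (by omega)
    have hbj := hblock j (by omega) hj
    have hpi := g.perm_mem i hi (by omega)
    have hpj := g.perm_mem j (by omega) hj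
    rcases Nat.lt_or_ge i (dOf u + 1) with h1 | h1
    · rcases Nat.lt_or_ge j (dOf u + 1) with h2 | h2
      · have hv := gamma_mono_false (u := u) hi hij (by omega)
        rw [← hg] at hv
        have hφv := hφmono _ _ hpi.1 hv hpj.2
        have hai := hbi.1 (by omega)
        have haj := hbj.1 (by omega)
        rw [hηval i hi (by omega)] at hai ⊢
        rw [hηval j (by omega) hj] at haj ⊢
        exact gamma_pos_lt_false (hφrange _ hpi.1 hpi.2).1 hφv (hφrange _ hpj.1 hpj.2).2 hai haj
      · have hai := hbi.1 (by omega)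
        rcases Nat.eq_or_lt_of_le h2 with he | hgt
        · have := hbj.2.1 (by omega); omega
        · have := hbj.2.2 (by omega); omega
    · have hj2 : dOf u + 2 ≤ j := by omega
      have hv := gamma_mono_true (u := u) h1 hij hj
      rw [← hg] at hv
      have hφv := hφmono _ _ hpi.1 hv hpj.2
      have hi' : dOf v + 1 ≤ η i := by
        rcases Nat.eq_or_lt_of_le h1 with he | hgt
        · have := hbi.2.1 (by omega); omega
        · have := hbi.2.2 (by omega); omega
      have hj' : dOf v + 2 ≤ η j := hbj.2.2 hj2
      rw [hηval i hi (by omega)] at hi' ⊢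
      rw [hηval j (by omega) hj] at hj' ⊢
      exact gamma_pos_lt_true (hφrange _ hpi.1 hpi.2).1 hφv (hφrange _ hpj.1 hpj.2).2 hi' (Nat.le_of_succ_le hj')
  have hvalext0 : valExt g h η 0 = 0 := by simp [valExt]
  have hvalext1 : valExt g h η 1 = 1 := by
    show (if (1:ℕ) = 0 then 0 else if 1 ≤ g.len then h.perm (η (g.pos 1)) else h.len + 1) = 1
    rw [if_neg (by omega), if_pos (by omega)]
    rw [show g.pos 1 = dOf u + 1 from gamma_pos_one u,
      (hblock (dOf u + 1) (by omega) (by omega)).2.1 rfl]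
    exact gamma_perm_mid v
  show ∃ η', IsOcc g h η'
  refine ⟨η, ?_, ?_, ?_, ?_, ?_, ?_⟩
  · intro i hi
    simp only [hη]; rw [if_neg (by omega)]
  · intro i a b; exact hmem i a b
  · intro i j a hij b; exact hmono i j a hij b
  · intro i j a b c d
    rw [hval i a b, hval j c d]
    have hpi := g.perm_mem i a b
    have hpj := g.perm_mem j c d
    constructor
    · intro hlt; exact hφmono _ _ hpi.1 hlt hpj.2
    · intro hlt
      rcases Nat.lt_trichotomy (g.perm i) (g.perm j) with hx | hx | hx
      · exact hx
      · exfalso; rw [hx] at hlt; omega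
      · exfalso
        have := hφmono _ _ hpj.1 hx hpi.2
        omega
  · rintro ⟨a, b⟩ hq y hy1 hy2 hint
    rw [gamma_sh_mem] at hq
    obtain ⟨ha, rfl⟩ := hq
    obtain ⟨_, _, h3, h4⟩ := hint
    rw [hvalext0] at h3
    rw [hvalext1] at h4
    omega
  · rintro ⟨i, b⟩ hq a bb hreg
    rw [gamma_sh_mem] at hq
    obtain ⟨hi, rfl⟩ := hq
    obtain ⟨h1, h2, h3, h4⟩ := hreg
    rw [hvalext1] at h4
    have hcol : colExt g h η (i + 1) = η (i + 1) := by
      show (if i + 1 = 0 then 0 else if i + 1 ≤ g.len then η (i + 1) else h.len + 1) = _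
      rw [if_neg (by omega), if_pos (by omega)]
    rw [hcol] at h2
    have hb := hblock (i + 1) (by omega) (by omega)
    have hup : η (i + 1) ≤ dOf v + 1 := by
      rcases Nat.lt_or_ge i (dOf u) with hc | hc
      · have := hb.1 (by omega); omega
      · have := hb.2.1 (by omega); omega
    rw [gamma_sh_mem]
    omega

lemma sublist_of_gamma_le {u v : List Bool} (hle : gammaOf u ≤ gammaOf v) : u.Sublist v := by
  obtain ⟨η, hocc⟩ := hle
  have hdu := dOf_le u; have hdv := dOf_le v
  set g := gammaOf u with hg
  set h := gammaOf v with hh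
  have hgl : g.len = u.length + 1 := rfl
  have hhl : h.len = v.length + 1 := rfl
  set φ : ℕ → ℕ := fun k => h.perm (η (g.pos k)) with hφ
  have hφmem : ∀ k, 1 ≤ k → k ≤ u.length + 1 → 1 ≤ φ k ∧ φ k ≤ v.length + 1 := by
    intro k a b
    simp only [hφ]
    have hp := g.pos_mem (v := k) a (by omega)
    have hm := hocc.mem _ hp.1 hp.2
    have := h.perm_mem _ hm.1 hm.2
    omega
  have hφmono : ∀ a b, 1 ≤ a → a < b → b ≤ u.length + 1 → φ a < φ b := by
    intro a b ha hab hb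
    simp only [hφ]
    have hpa := g.pos_mem (v := a) ha (by omega)
    have hpb := g.pos_mem (v := b) (by omega) (by omega)
    have hpat := hocc.pattern (g.pos a) (g.pos b) hpa.1 hpa.2 hpb.1 hpb.2
    rw [g.perm_pos_eq ha (by omega), g.perm_pos_eq (by omega) (by omega)] at hpat
    exact hpat.mp hab
  have hp1 := g.pos_mem (v := 1) (by omega) (by omega)
  have hm1 := hocc.mem _ hp1.1 hp1.2
  have hφ1 : φ 1 = 1 := by
    by_contra hne
    have hpm1 := h.perm_mem _ hm1.1 hm1.2
    have hφ1ge : 2 ≤ φ 1 := by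
      simp only [hφ]
      have : 1 ≤ φ 1 ∧ φ 1 ≤ v.length + 1 := hφmem 1 (by omega) (by omega)
      simp only [hφ] at this hne
      omega
    have hsh00 : ((0, 0) : ℕ × ℕ) ∈ g.sh := gamma_sh_mem.mpr ⟨by omega, rfl⟩
    have hm1' := hocc.mem 1 (by omega) (by omega)
    have hreg : inRegion g h η 0 0 0 1 := by
      refine ⟨?_, ?_, ?_, ?_⟩
      · show colExt g h η 0 ≤ 0
        show (if (0:ℕ) = 0 then 0 else _) ≤ 0
        rw [if_pos rfl]
      · show 0 < colExt g h η 1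
        show 0 < (if (1:ℕ) = 0 then 0 else if 1 ≤ g.len then η 1 else h.len + 1)
        rw [if_neg (by omega), if_pos (by omega)]
        omega
      · show valExt g h η 0 ≤ 1
        show (if (0:ℕ) = 0 then 0 else _) ≤ 1
        rw [if_pos rfl]; omega
      · show 1 < valExt g h η 1
        show 1 < (if (1:ℕ) = 0 then 0 else if 1 ≤ g.len then h.perm (η (g.pos 1)) else h.len + 1)
        rw [if_neg (by omega), if_pos (by omega)]
        simp only [hφ] at hφ1ge
        omega
    have := hocc.shaded (0, 0) hsh00 0 1 hreg
    rw [gamma_sh_mem] at this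
    omega
  have hposu1 : g.pos 1 = dOf u + 1 := gamma_pos_one u
  have hη1 : η (dOf u + 1) = dOf v + 1 := by
    have : h.pos (φ 1) = η (g.pos 1) := h.pos_eq_of hm1.1 hm1.2 rfl
    rw [hφ1, hposu1] at this
    rw [← this]
    exact gamma_pos_one v
  have hletter : ∀ k, 2 ≤ k → k ≤ u.length + 1 →
      2 ≤ φ k ∧ v.getD (φ k - 2) true = u.getD (k - 2) true := by
    intro k h2 hk
    have hpk := g.pos_mem (v := k) (by omega) (by omega)
    have hmk := hocc.mem _ hpk.1 hpk.2
    have hpmk := h.perm_mem _ hmk.1 hmk.2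
    have hposk : h.pos (φ k) = η (g.pos k) := h.pos_eq_of hmk.1 hmk.2 rfl
    have hkne : g.pos k ≠ dOf u + 1 := by
      intro he
      have hpe := g.perm_pos_eq (v := k) (by omega) (by omega)
      rw [he] at hpe
      have hmid := gamma_perm_mid u
      rw [← hg] at hmid
      omega
    have hφk2 : 2 ≤ φ k := by
      rcases Nat.eq_or_lt_of_le (hφmem k (by omega) hk).1 with he | hlt
      · exfalso
        have : h.pos (φ k) = dOf v + 1 := by rw [← he, gamma_pos_one v]
        rw [hposk] at this
        rcases Nat.lt_or_ge (g.pos k) (dOf u + 1) with hc | hc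
        · have := hocc.mono _ _ hpk.1 hc (by omega)
          omega
        · have := hocc.mono (dOf u + 1) (g.pos k) (by omega) (by omega) (by omega)
          omega
      · omega
    refine ⟨hφk2, ?_⟩
    rcases Nat.lt_or_ge (g.pos k) (dOf u + 1) with hc | hc
    · have huf : u.getD (k - 2) true = false := by
        have := (gamma_pos_false (u := u) (v := k) h2 hk).mp (by rw [← hg]; omega)
        exact this
      have hηlt := hocc.mono _ _ hpk.1 hc (by omega)
      rw [hη1] at hηlt
      have hvf : v.getD (φ k - 2) true = false := by
        have := (gamma_pos_false (u := v) (v := φ k) hφk2 (hφmem k (by omega) hk).2).mp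
          (by rw [← hh]; omega)
        exact this
      rw [huf, hvf]
    · have hut : u.getD (k - 2) true = true := by
        exact (gamma_pos_true (u := u) (v := k) h2 hk).mp (by rw [← hg]; omega)
      have hηgt := hocc.mono (dOf u + 1) (g.pos k) (by omega) (by omega) (by omega)
      rw [hη1] at hηgt
      have hvt : v.getD (φ k - 2) true = true := by
        exact (gamma_pos_true (u := v) (v := φ k) hφk2 (hφmem k (by omega) hk).2).mp
          (by rw [← hh]; omega)
      rw [hut, hvt]
  rw [List.sublist_iff_exists_fin_orderEmbedding_get_eq]
  have hvpos : ∀ x : Fin u.length, φ ((x : ℕ) + 2) - 2 < v.length := by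
    intro x
    have hx := x.2
    have h1 := hφmem ((x : ℕ) + 2) (by omega) (by omega)
    have h2 := (hletter ((x : ℕ) + 2) (by omega) (by omega)).1
    omega
  refine ⟨OrderEmbedding.ofStrictMono (fun x => ⟨φ ((x : ℕ) + 2) - 2, hvpos x⟩) ?_, ?_⟩
  · intro x y hxy
    have hx := x.2; have hy := y.2
    have h2x := (hletter ((x : ℕ) + 2) (by omega) (by omega)).1
    have hxy' : (x : ℕ) < (y : ℕ) := hxy
    have := hφmono ((x : ℕ) + 2) ((y : ℕ) + 2) (by omega) (by omega) (by omega)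
    simp only [Fin.lt_def]
    omega
  · intro x
    have hx := x.2
    have hl := hletter ((x : ℕ) + 2) (by omega) (by omega)
    simp only [OrderEmbedding.coe_ofStrictMono, List.get_eq_getElem]
    have := hl.2
    rw [List.getD_eq_getElem _ _ (hvpos x), List.getD_eq_getElem _ _
      (show (x : ℕ) + 2 - 2 < u.length by omega)] at this
    simp only [show (x : ℕ) + 2 - 2 = (x : ℕ) from by omega] at this
    exact this.symm

lemma gamma_le_iff {u v : List Bool} : gammaOf u ≤ gammaOf v ↔ u.Sublist v :=
  ⟨sublist_of_gamma_le, gamma_le_of_sublist⟩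

lemma pat21_len : pat21.len = 2 := rfl

lemma pat21_isGamma : IsGamma pat21 1 := by
  refine ⟨le_refl 1, by decide, by decide, ?_, by decide⟩
  intro i h1 h2 h3
  have hl : pat21.len = 2 := rfl
  omega

lemma pat21_wordOf : pat21.wordOf = [false] := by
  have h2 : pat21.pos 1 = 2 := pat21_isGamma.pos_one
  have h1 : pat21.pos 2 = 1 := pat21.pos_eq_of (i := 1) (by decide) (by decide) (by decide)
  show (List.range (pat21.len - 1)).map _ = [false]
  rw [show pat21.len - 1 = 1 from by decide]
  rw [show List.range 1 = [0] from rfl]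
  simp only [List.map_cons, List.map_nil]
  rw [show (0 : ℕ) + 2 = 2 from rfl, h1, h2]
  norm_num

lemma pat21_eq : pat21 = gammaOf [false] := by
  have h := pat21_isGamma.gamma_eq
  rw [pat21_wordOf] at h
  exact h.symm

lemma isGamma_of_mem {w : List Bool} {c : MeshPattern}
    (h21 : pat21 ≤ c) (hcm : c ≤ gammaOf w) : IsGamma c (c.pos 1 - 1) := by
  obtain ⟨θ, hθ⟩ := h21
  obtain ⟨η, hη⟩ := hcm
  have hdw := dOf_le w
  set g := gammaOf w with hgdef
  have hgl : g.len = w.length + 1 := rfl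
  have hp2l : pat21.len = 2 := rfl
  have hθ1 := hθ.mem 1 (by omega) (by omega)
  have hθ2 := hθ.mem 2 (by omega) (by omega)
  have hθ12 := hθ.mono 1 2 (by omega) (by omega) (by omega)
  have hc2 : 2 ≤ c.len := by omega
  have hp21pos1 : pat21.pos 1 = 2 := pat21_isGamma.pos_one
  -- value of the image of the bottom of pat21
  have hv2 := c.perm_mem (θ 2) hθ2.1 hθ2.2
  -- Step A : (0,0) ∈ c.sh
  have hvalextP : valExt pat21 c θ 1 = c.perm (θ 2) := by
    show (if (1:ℕ) = 0 then 0 else if 1 ≤ pat21.len then c.perm (θ (pat21.pos 1)) else c.len + 1)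
      = c.perm (θ 2)
    rw [if_neg (by omega), if_pos (by omega), hp21pos1]
  have hsh00 : ((0, 0) : ℕ × ℕ) ∈ c.sh := by
    apply hθ.shaded (0, 0) (by decide) 0 0
    refine ⟨?_, ?_, ?_, ?_⟩
    · show (if (0:ℕ) = 0 then 0 else _) ≤ 0
      rw [if_pos rfl]
    · show 0 < (if (1:ℕ) = 0 then 0 else if 1 ≤ pat21.len then θ 1 else c.len + 1)
      rw [if_neg (by omega), if_pos (by omega)]
      omega
    · show (if (0:ℕ) = 0 then 0 else _) ≤ 0
      rw [if_pos rfl]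
    · rw [hvalextP]; omega
  -- occurrence of c in g : basic facts
  have hφmem : ∀ k, 1 ≤ k → k ≤ c.len → 1 ≤ g.perm (η (c.pos k)) ∧
      g.perm (η (c.pos k)) ≤ w.length + 1 := by
    intro k a b
    have hp := c.pos_mem (v := k) a b
    have hm := hη.mem _ hp.1 hp.2
    have := g.perm_mem _ hm.1 hm.2
    omega
  have hposc1 := c.pos_mem (v := 1) (by omega) (by omega)
  have hmc1 := hη.mem _ hposc1.1 hposc1.2
  -- φ 1 = 1
  have hφ1 : g.perm (η (c.pos 1)) = 1 := by
    by_contra hne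
    have hge2 : 2 ≤ g.perm (η (c.pos 1)) := by
      have := hφmem 1 (by omega) (by omega); omega
    have hm1 := hη.mem 1 (by omega) (by omega)
    have hbad := hη.shaded (0, 0) hsh00 0 1 ?_
    · rw [gamma_sh_mem] at hbad; omega
    refine ⟨?_, ?_, ?_, ?_⟩
    · show (if (0:ℕ) = 0 then 0 else _) ≤ 0
      rw [if_pos rfl]
    · show 0 < (if (1:ℕ) = 0 then 0 else if 1 ≤ c.len then η 1 else g.len + 1)
      rw [if_neg (by omega), if_pos (by omega)]
      omega
    · show (if (0:ℕ) = 0 then 0 else _) ≤ 1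
      rw [if_pos rfl]; omega
    · show 1 < (if (1:ℕ) = 0 then 0 else if 1 ≤ c.len then g.perm (η (c.pos 1)) else g.len + 1)
      rw [if_neg (by omega), if_pos (by omega)]
      omega
  have hηpos1 : η (c.pos 1) = dOf w + 1 := by
    have h1 : g.pos (g.perm (η (c.pos 1))) = η (c.pos 1) := g.pos_perm hmc1.1 hmc1.2
    rw [hφ1, gamma_pos_one w] at h1
    omega
  -- valExt of c in g at 1 is 1
  have hvalext1 : valExt c g η 1 = 1 := by
    show (if (1:ℕ) = 0 then 0 else if 1 ≤ c.len then g.perm (η (c.pos 1)) else g.len + 1) = 1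
    rw [if_neg (by omega), if_pos (by omega), hφ1]
  have hvalext0 : valExt c g η 0 = 0 := by
    show (if (0:ℕ) = 0 then 0 else _) = 0
    rw [if_pos rfl]
  -- colExt strict monotone step
  have hcollt : ∀ i, i ≤ c.len → colExt c g η i < colExt c g η (i + 1) := by
    intro i hi
    rcases Nat.eq_zero_or_pos i with rfl | hi1
    · show (if (0:ℕ) = 0 then 0 else _) < (if (1:ℕ) = 0 then 0
        else if 1 ≤ c.len then η 1 else g.len + 1)
      rw [if_pos rfl, if_neg (by omega), if_pos (by omega)]
      have := hη.mem 1 (by omega) (by omega); omega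
    rcases Nat.eq_or_lt_of_le hi with he | hilt
    · show (if i = 0 then 0 else if i ≤ c.len then η i else g.len + 1)
        < (if i + 1 = 0 then 0 else if i + 1 ≤ c.len then η (i + 1) else g.len + 1)
      rw [if_neg (by omega), if_pos (by omega), if_neg (by omega), if_neg (by omega)]
      have := hη.mem i (by omega) (by omega)
      omega
    · show (if i = 0 then 0 else if i ≤ c.len then η i else g.len + 1)
        < (if i + 1 = 0 then 0 else if i + 1 ≤ c.len then η (i + 1) else g.len + 1)
      rw [if_neg (by omega), if_pos (by omega), if_neg (by omega), if_pos (by omega)]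
      exact hη.mono i (i + 1) hi1 (by omega) (by omega)
  -- valExt strict monotone step
  have hvallt : ∀ j, j ≤ c.len → valExt c g η j < valExt c g η (j + 1) := by
    intro j hj
    rcases Nat.eq_zero_or_pos j with rfl | hj1
    · rw [hvalext0]
      show 0 < (if (1:ℕ) = 0 then 0 else if 1 ≤ c.len then g.perm (η (c.pos 1)) else g.len + 1)
      rw [if_neg (by omega), if_pos (by omega)]
      omega
    rcases Nat.eq_or_lt_of_le hj with he | hjlt
    · show (if j = 0 then 0 else if j ≤ c.len then g.perm (η (c.pos j)) else g.len + 1)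
        < (if j + 1 = 0 then 0 else if j + 1 ≤ c.len then g.perm (η (c.pos (j + 1))) else g.len + 1)
      rw [if_neg (by omega), if_pos (by omega), if_neg (by omega), if_neg (by omega)]
      have := hφmem j (by omega) (by omega)
      omega
    · show (if j = 0 then 0 else if j ≤ c.len then g.perm (η (c.pos j)) else g.len + 1)
        < (if j + 1 = 0 then 0 else if j + 1 ≤ c.len then g.perm (η (c.pos (j + 1))) else g.len + 1)
      rw [if_neg (by omega), if_pos (by omega), if_neg (by omega), if_pos (by omega)]
      have hpj := c.pos_mem (v := j) (by omega) (by omega)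
      have hpj1 := c.pos_mem (v := j + 1) (by omega) (by omega)
      have hpat := hη.pattern (c.pos j) (c.pos (j + 1)) hpj.1 hpj.2 hpj1.1 hpj1.2
      rw [c.perm_pos_eq (by omega) (by omega), c.perm_pos_eq (by omega) (by omega)] at hpat
      exact hpat.mp (by omega)
  -- Step C ⊆ : any shaded box of c is (i, 0) with i < c.pos 1
  have hsub : ∀ a b : ℕ, (a, b) ∈ c.sh → b = 0 ∧ a < c.pos 1 := by
    intro a b hab
    have hbound := c.sh_mem _ hab
    simp only at hbound
    -- the corner box of the region is a shaded box of g
    have hcorner := hη.shaded (a, b) hab (colExt c g η a) (valExt c g η b)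
      ⟨le_refl _, hcollt a hbound.1, le_refl _, hvallt b hbound.2⟩
    rw [gamma_sh_mem] at hcorner
    have hb0 : b = 0 := by
      by_contra hb
      have : valExt c g η b = g.perm (η (c.pos b)) := by
        show (if b = 0 then 0 else if b ≤ c.len then g.perm (η (c.pos b)) else g.len + 1) = _
        rw [if_neg hb, if_pos hbound.2]
      rw [this] at hcorner
      have := hφmem b (by omega) hbound.2
      omega
    subst hb0
    refine ⟨rfl, ?_⟩
    -- the rightmost box of the region bounds the column
    have hright := hη.shaded (a, 0) hab (colExt c g η (a + 1) - 1) (valExt c g η 0)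
      ⟨(by have := hcollt a hbound.1; omega :
          colExt c g η a ≤ colExt c g η (a + 1) - 1),
        (by have := hcollt a hbound.1; omega :
          colExt c g η (a + 1) - 1 < colExt c g η (a + 1)),
        le_refl _, hvallt 0 (by omega)⟩
    rw [gamma_sh_mem, hvalext0] at hright
    by_contra hc
    push_neg at hc
    have hcol1 : dOf w + 1 < colExt c g η (a + 1) := by
      rcases Nat.lt_or_ge a c.len with hlt | hge
      · have : colExt c g η (a + 1) = η (a + 1) := by
          show (if a + 1 = 0 then 0 else if a + 1 ≤ c.len then η (a + 1) else g.len + 1) = _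
          rw [if_neg (by omega), if_pos (by omega)]
        rw [this, ← hηpos1]
        exact hη.mono (c.pos 1) (a + 1) hposc1.1 (by omega) (by omega)
      · have : colExt c g η (a + 1) = g.len + 1 := by
          show (if a + 1 = 0 then 0 else if a + 1 ≤ c.len then η (a + 1) else g.len + 1) = _
          rw [if_neg (by omega), if_neg (by omega)]
        rw [this]
        omega
    omega
  -- θ 2 is the position of 1 in c
  have hbot : c.perm (θ 2) = 1 := by
    by_contra hne
    have h2 : 2 ≤ c.perm (θ 2) := by omega
    have hbad := hθ.shaded (0, 0) (by decide) 0 1 ?_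
    · have := hsub 0 1 hbad; omega
    refine ⟨?_, ?_, ?_, ?_⟩
    · show (if (0:ℕ) = 0 then 0 else _) ≤ 0
      rw [if_pos rfl]
    · show 0 < (if (1:ℕ) = 0 then 0 else if 1 ≤ pat21.len then θ 1 else c.len + 1)
      rw [if_neg (by omega), if_pos (by omega)]
      omega
    · show (if (0:ℕ) = 0 then 0 else _) ≤ 1
      rw [if_pos rfl]; omega
    · rw [hvalextP]; omega
  have hposθ2 : c.pos 1 = θ 2 := c.pos_eq_of hθ2.1 hθ2.2 hbot
  -- Step C ⊇ : all boxes (i, 0), i < θ 2, are shaded in c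
  have hsup : ∀ i, i < θ 2 → (i, 0) ∈ c.sh := by
    intro i hi
    rcases Nat.lt_or_ge i (θ 1) with hlt | hge
    · apply hθ.shaded (0, 0) (by decide) i 0
      refine ⟨?_, ?_, ?_, ?_⟩
      · show (if (0:ℕ) = 0 then 0 else _) ≤ i
        rw [if_pos rfl]; omega
      · show i < (if (1:ℕ) = 0 then 0 else if 1 ≤ pat21.len then θ 1 else c.len + 1)
        rw [if_neg (by omega), if_pos (by omega)]
        omega
      · show (if (0:ℕ) = 0 then 0 else _) ≤ 0
        rw [if_pos rfl]
      · rw [hvalextP]; omega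
    · apply hθ.shaded (1, 0) (by decide) i 0
      refine ⟨?_, ?_, ?_, ?_⟩
      · show (if (1:ℕ) = 0 then 0 else if 1 ≤ pat21.len then θ 1 else c.len + 1) ≤ i
        rw [if_neg (by omega), if_pos (by omega)]
        omega
      · show i < (if (2:ℕ) = 0 then 0 else if 2 ≤ pat21.len then θ 2 else c.len + 1)
        rw [if_neg (by omega), if_pos (by omega)]
        omega
      · show (if (0:ℕ) = 0 then 0 else _) ≤ 0
        rw [if_pos rfl]
      · rw [hvalextP]; omega
  -- descent structure
  have hasc : ∀ i, 1 ≤ i → i < c.len → i ≠ c.pos 1 - 1 → c.perm i < c.perm (i + 1) := by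
    intro i h1 h2 h3
    have hmi := hη.mem i h1 (by omega)
    have hmi1 := hη.mem (i + 1) (by omega) (by omega)
    have hmono := hη.mono i (i + 1) h1 (by omega) (by omega)
    have hpat := hη.pattern i (i + 1) h1 (by omega) (by omega) (by omega)
    have hperm := c.perm_mem i h1 (by omega)
    have hperm1 := c.perm_mem (i + 1) (by omega) (by omega)
    apply hpat.mpr
    rcases Nat.lt_or_ge (η (i + 1)) (dOf w + 1) with hb | hb
    · exact gamma_mono_false hmi.1 hmono (by omega)
    rcases Nat.lt_or_ge (η i) (dOf w + 1) with ha | ha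
    · -- crossing : forces i = c.pos 1 - 1
      exfalso
      have hi1 : i < c.pos 1 := by
        by_contra hcon
        push_neg at hcon
        rcases Nat.eq_or_lt_of_le hcon with he | hlt
        · rw [he] at hηpos1; omega
        · have := hη.mono (c.pos 1) i hposc1.1 hlt (by omega)
          omega
      have hi2 : c.pos 1 ≤ i + 1 := by
        by_contra hcon
        push_neg at hcon
        have := hη.mono (i + 1) (c.pos 1) (by omega) hcon hposc1.2
        omega
      omega
    · exact gamma_mono_true ha hmono hmi1.2
  refine ⟨by omega, by omega, ?_, ?_, ?_⟩
  · rw [show c.pos 1 - 1 + 1 = c.pos 1 from by omega, hposθ2]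
    exact hbot
  · exact hasc
  · apply Finset.ext
    rintro ⟨a, b⟩
    simp only [Finset.mem_image, Finset.mem_range, Prod.mk.injEq]
    constructor
    · intro hab
      have hs := hsub a b hab
      exact ⟨a, by omega, rfl, hs.1.symm⟩
    · rintro ⟨i, hi, rfl, rfl⟩
      exact hsup i (by omega)

/-- For `m` in the class `Γ` (one descent, at position `d`, with descent bottom the
letter `1`, and exactly the boxes southwest of the point of value `1` shaded), the
interval `[21^{(0,0),(1,0)}, m]` of the mesh pattern poset is isomorphic to the interval
`[0, w]` in the poset of binary words under subword order, where `w = wordOf m`. -/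
theorem interval_gamma_iso_words (m : MeshPattern) (d : ℕ)
    (hd1 : 1 ≤ d) (hd2 : d < m.len)
    (hdesc : m.perm (d + 1) < m.perm d)
    (huniq : ∀ i, 1 ≤ i → i < m.len → m.perm (i + 1) < m.perm i → i = d)
    (hbot : m.perm (d + 1) = 1)
    (hsh : m.sh = (Finset.range (d + 1)).image (fun i => (i, 0))) :
    Nonempty ({c : MeshPattern // pat21 ≤ c ∧ c ≤ m} ≃o
      {u : Word // Word.mk [false] ≤ u ∧ u ≤ Word.mk m.wordOf}) := by
  have hGm : IsGamma m d := by
    refine ⟨hd1, hd2, hbot, ?_, hsh⟩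
    intro i h1 h2 h3
    have hpi := m.perm_mem i h1 (by omega)
    have hpi1 := m.perm_mem (i + 1) (by omega) (by omega)
    rcases Nat.lt_trichotomy (m.perm i) (m.perm (i + 1)) with h | h | h
    · exact h
    · exact absurd (m.perm_inj i (i + 1) h1 (by omega) (by omega) (by omega) h) (by omega)
    · exact absurd (huniq i h1 h2 h) h3
  have hmw : gammaOf m.wordOf = m := hGm.gamma_eq
  have hp21 := pat21_eq
  have hmemA : ∀ c : MeshPattern, pat21 ≤ c → c ≤ m →
      gammaOf c.wordOf = c ∧ [false].Sublist c.wordOf ∧ c.wordOf.Sublist m.wordOf := by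
    intro c h1 h2
    have hg := (isGamma_of_mem h1 (by rw [hmw]; exact h2)).gamma_eq
    refine ⟨hg, ?_, ?_⟩
    · apply sublist_of_gamma_le
      rw [hg, ← hp21]
      exact h1
    · apply sublist_of_gamma_le
      rw [hg, hmw]
      exact h2
  exact ⟨{
    toFun := fun c => ⟨Word.mk c.1.wordOf,
      (hmemA c.1 c.2.1 c.2.2).2.1, (hmemA c.1 c.2.1 c.2.2).2.2⟩
    invFun := fun uu => ⟨gammaOf uu.1.toList,
      by have h := gamma_le_of_sublist (uu.2.1 : [false].Sublist uu.1.toList)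
         rwa [← hp21] at h,
      by have h := gamma_le_of_sublist (uu.2.2 : uu.1.toList.Sublist m.wordOf)
         rwa [hmw] at h⟩
    left_inv := fun c => Subtype.ext (hmemA c.1 c.2.1 c.2.2).1
    right_inv := fun uu => Subtype.ext (by
      obtain ⟨⟨l⟩, h2⟩ := uu
      exact congrArg Word.mk (wordOf_gamma l))
    map_rel_iff' := by
      intro a b
      constructor
      · intro hab
        have hab' : a.1.wordOf.Sublist b.1.wordOf := hab
        have h := gamma_le_of_sublist hab'
        have e1 := (hmemA a.1 a.2.1 a.2.2).1
        have e2 := (hmemA b.1 b.2.1 b.2.2).1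
        rw [e1, e2] at h
        exact h
      · intro hab
        have h : gammaOf a.1.wordOf ≤ gammaOf b.1.wordOf := by
          rw [(hmemA a.1 a.2.1 a.2.2).1, (hmemA b.1 b.2.1 b.2.2).1]
          exact hab
        exact sublist_of_gamma_le h }⟩

end MeshPattern
end

section
/- Let N(n) be the number of mesh patterns of length n that contain at least one of the four mesh patterns 1^{(0,0)}, 1^{(1,0)}, 1^{(0,1)}, 1^{(1,1)}, and let T(n) = n!·2^{(n+1)^2} be the total number of mesh patterns of length n. Then N(n)/T(n) ≤ 8/n for all n ≥ 1; in particular the proportion of mesh patterns of length n containing any of these four patterns tends to 0 as n tends to infinity. -/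
namespace MeshPattern

/-- `p` contains one of the four shaded singleton mesh patterns
`1^{(0,0)}, 1^{(1,0)}, 1^{(0,1)}, 1^{(1,1)}`. -/
def ContainsShadedSingle (p : MeshPattern) : Prop :=
  one00 ≤ p ∨ one10 ≤ p ∨ one01 ≤ p ∨ one11 ≤ p

/-- The number of mesh patterns of length `n` containing one of the four shaded
singleton mesh patterns. -/
noncomputable def Ncount (n : ℕ) : ℕ :=
  {p : MeshPattern | p.len = n ∧ ContainsShadedSingle p}.ncard

section Aux

open Finset

private lemma mp_ext {p q : MeshPattern} (h1 : p.len = q.len) (h2 : p.perm = q.perm)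
    (h3 : p.sh = q.sh) : p = q := by
  cases p; cases q; simp_all

/-- Embedding of boxes into `Fin (n+1) × Fin (n+1)`. -/
def embBox (n : ℕ) (q : ℕ × ℕ) : Fin (n + 1) × Fin (n + 1) :=
  (⟨q.1 % (n + 1), Nat.mod_lt _ (by omega)⟩, ⟨q.2 % (n + 1), Nat.mod_lt _ (by omega)⟩)

lemma embBox_inj {n : ℕ} {q q' : ℕ × ℕ} (hq : q.1 ≤ n ∧ q.2 ≤ n) (hq' : q'.1 ≤ n ∧ q'.2 ≤ n)
    (h : embBox n q = embBox n q') : q = q' := by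
  obtain ⟨a, b⟩ := q; obtain ⟨c, d⟩ := q'
  simp only [embBox, Prod.ext_iff, Fin.mk.injEq] at h ⊢
  obtain ⟨h1, h2⟩ := h
  rw [Nat.mod_eq_of_lt (by omega), Nat.mod_eq_of_lt (by omega)] at h1
  rw [Nat.mod_eq_of_lt (by omega), Nat.mod_eq_of_lt (by omega)] at h2
  exact ⟨h1, h2⟩

/-- The shading of `p`, as a finset of the finite grid. -/
def shFin (n : ℕ) (p : MeshPattern) : Finset (Fin (n + 1) × Fin (n + 1)) :=
  p.sh.image (embBox n)

lemma sh_eq_of_shFin_eq {n : ℕ} {p q : MeshPattern} (hp : p.len = n) (hq : q.len = n)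
    (h : shFin n p = shFin n q) : p.sh = q.sh := by
  ext x
  constructor
  · intro hx
    have : embBox n x ∈ shFin n q := h ▸ Finset.mem_image_of_mem _ hx
    obtain ⟨y, hy, hxy⟩ := Finset.mem_image.mp this
    have := embBox_inj (hq ▸ q.sh_mem y hy) (hp ▸ p.sh_mem x hx) hxy
    exact this ▸ hy
  · intro hx
    have : embBox n x ∈ shFin n p := h ▸ Finset.mem_image_of_mem _ hx
    obtain ⟨y, hy, hxy⟩ := Finset.mem_image.mp this
    have := embBox_inj (hp ▸ p.sh_mem y hy) (hq ▸ q.sh_mem x hx) hxy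
    exact this ▸ hy

/-- The underlying permutation of `p` as an `Equiv.Perm (Fin n)` (junk if `p.len ≠ n`). -/
noncomputable def pAux (n : ℕ) (p : MeshPattern) : Equiv.Perm (Fin n) :=
  if h : ∃ σ : Equiv.Perm (Fin n), ∀ k : Fin n, ((σ k : ℕ) + 1) = p.perm ((k : ℕ) + 1) then
    h.choose else 1

lemma pAux_spec {n : ℕ} {p : MeshPattern} (hp : p.len = n) (k : Fin n) :
    ((pAux n p k : ℕ) + 1) = p.perm ((k : ℕ) + 1) := by
  have hmem : ∀ k : Fin n, 1 ≤ p.perm ((k : ℕ) + 1) ∧ p.perm ((k : ℕ) + 1) ≤ n := by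
    intro k
    have hk := k.isLt
    have := p.perm_mem ((k : ℕ) + 1) (by omega) (by omega)
    omega
  have hex : ∃ σ : Equiv.Perm (Fin n), ∀ k : Fin n, ((σ k : ℕ) + 1) = p.perm ((k : ℕ) + 1) := by
    have hinj : Function.Injective
        (fun k : Fin n => (⟨p.perm ((k : ℕ) + 1) - 1, by have := hmem k; omega⟩ : Fin n)) := by
      intro k k' hkk'
      have h1 := hmem k
      have h2 := hmem k'
      have h3 : p.perm ((k : ℕ) + 1) = p.perm ((k' : ℕ) + 1) := by
        have := Fin.mk.injEq (p.perm ((k : ℕ) + 1) - 1) _ (p.perm ((k' : ℕ) + 1) - 1) _ ▸ hkk'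
        simp only [Fin.mk.injEq] at hkk'
        omega
      have hk := k.isLt; have hk' := k'.isLt
      have := p.perm_inj ((k : ℕ) + 1) ((k' : ℕ) + 1) (by omega) (by omega) (by omega) (by omega) h3
      exact Fin.ext (by omega)
    refine ⟨Equiv.ofBijective _ (Finite.injective_iff_bijective.mp hinj), fun k => ?_⟩
    have h1 := hmem k
    show ((⟨p.perm ((k : ℕ) + 1) - 1, _⟩ : Fin n) : ℕ) + 1 = _
    simp only
    omega
  rw [pAux, dif_pos hex]
  exact hex.choose_spec k

lemma perm_eq_of_pAux_eq {n : ℕ} {p q : MeshPattern} (hp : p.len = n) (hq : q.len = n)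
    (h : pAux n p = pAux n q) : p.perm = q.perm := by
  funext j
  by_cases hj : 1 ≤ j ∧ j ≤ n
  · have h1 := pAux_spec hp (⟨j - 1, by omega⟩ : Fin n)
    have h2 := pAux_spec hq (⟨j - 1, by omega⟩ : Fin n)
    rw [h] at h1
    simp only [Fin.val_mk] at h1 h2
    have hj1 : j - 1 + 1 = j := by omega
    rw [hj1] at h1 h2
    omega
  · rw [p.perm_zero j (by omega), q.perm_zero j (by omega)]

lemma pAux_at {n : ℕ} {p : MeshPattern} (hp : p.len = n) {i v : ℕ} (hi : 1 ≤ i) (hin : i ≤ n)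
    (hv : 1 ≤ v) (hpiv : p.perm i = v) : pAux n p ⟨i - 1, by omega⟩ = ⟨v - 1, by
      have := p.perm_mem i (by omega) (by omega); omega⟩ := by
  have h1 := pAux_spec hp (⟨i - 1, by omega⟩ : Fin n)
  simp only [Fin.val_mk] at h1
  rw [show i - 1 + 1 = i by omega] at h1
  exact Fin.ext (by simp only [Fin.val_mk]; omega)

lemma finite_len (n : ℕ) : {p : MeshPattern | p.len = n}.Finite := by
  apply Set.Finite.of_finite_image (f := fun p => (pAux n p, shFin n p)) (Set.toFinite _)
  intro p hp q hq h
  exact mp_ext (hp.trans hq.symm)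
    (perm_eq_of_pAux_eq hp hq (congrArg Prod.fst h))
    (sh_eq_of_shFin_eq hp hq (congrArg Prod.snd h))

set_option maxHeartbeats 1600000 in
set_option maxHeartbeats 1600000 in
lemma key_count (n i v : ℕ) (hi : 1 ≤ i) (hin : i ≤ n) (hv : 1 ≤ v) (hvn : v ≤ n)
    (R : Finset (ℕ × ℕ)) (hR : ∀ q ∈ R, q.1 ≤ n ∧ q.2 ≤ n) :
    n * {p : MeshPattern | p.len = n ∧ p.perm i = v ∧ R ⊆ p.sh}.ncard ≤
      n.factorial * 2 ^ ((n + 1) ^ 2 - R.card) := by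
  classical
  set A := {p : MeshPattern | p.len = n ∧ p.perm i = v ∧ R ⊆ p.sh} with hAdef
  have hA : A.Finite := (finite_len n).subset (fun p hp => hp.1)
  have hcard : A.ncard = hA.toFinset.card := Set.ncard_eq_toFinset_card _ hA
  set F := hA.toFinset with hF
  set R' : Finset (Fin (n + 1) × Fin (n + 1)) := R.image (embBox n) with hR'def
  have hR'card : R'.card = R.card :=
    Finset.card_image_of_injOn (fun q hq q' hq' h => embBox_inj (hR q hq) (hR q' hq') h)
  set i0 : Fin n := ⟨i - 1, by omega⟩
  set v0 : Fin n := ⟨v - 1, by omega⟩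
  have hmemF : ∀ p ∈ F, p.len = n ∧ p.perm i = v ∧ R ⊆ p.sh := by
    intro p hp; exact (Set.Finite.mem_toFinset hA).mp hp
  have main : ((Finset.univ : Finset (Fin n)) ×ˢ F).card ≤
      ((Finset.univ : Finset (Equiv.Perm (Fin n))) ×ˢ
        ((Finset.univ \ R').powerset)).card := by
    apply Finset.card_le_card_of_injOn
      (fun x => (Equiv.swap v0 x.1 * pAux n x.2, shFin n x.2 \ R'))
    · intro x _
      rw [Finset.mem_coe, Finset.mem_product]
      exact ⟨Finset.mem_univ _, Finset.mem_powerset.mpr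
        (Finset.sdiff_subset_sdiff (Finset.subset_univ _) le_rfl)⟩
    · rintro ⟨w, p⟩ hx ⟨w', p'⟩ hy hxy
      simp only [Finset.coe_product, Set.mem_prod, Finset.mem_coe] at hx hy
      obtain ⟨hpl, hpiv, hpR⟩ := hmemF p hx.2
      obtain ⟨hpl', hpiv', hpR'⟩ := hmemF p' hy.2
      have hfst := congrArg Prod.fst hxy
      have hsnd := congrArg Prod.snd hxy
      simp only at hfst hsnd
      have hp0 : pAux n p i0 = v0 := pAux_at hpl hi hin hv hpiv
      have hp0' : pAux n p' i0 = v0 := pAux_at hpl' hi hin hv hpiv'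
      have hww' : w = w' := by
        have := congrArg (fun σ : Equiv.Perm (Fin n) => σ i0) hfst
        simp only [Equiv.Perm.mul_apply, hp0, hp0'] at this
        rwa [Equiv.swap_apply_left, Equiv.swap_apply_left] at this
      have hperm : pAux n p = pAux n p' := by
        rw [hww'] at hfst
        exact mul_left_cancel hfst
      have hRsub : R' ⊆ shFin n p := Finset.image_subset_image hpR
      have hRsub' : R' ⊆ shFin n p' := Finset.image_subset_image hpR'
      have hsh : shFin n p = shFin n p' := by
        rw [← Finset.sdiff_union_of_subset hRsub, ← Finset.sdiff_union_of_subset hRsub', hsnd]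
      have := mp_ext (hpl.trans hpl'.symm) (perm_eq_of_pAux_eq hpl hpl' hperm)
        (sh_eq_of_shFin_eq hpl hpl' hsh)
      rw [hww', this]
  rw [Finset.card_product, Finset.card_univ, Fintype.card_fin] at main
  rw [Finset.card_product, Finset.card_univ, Fintype.card_perm, Fintype.card_fin,
    Finset.card_powerset, Finset.card_sdiff_of_subset (Finset.subset_univ _), Finset.card_univ] at main
  have hgrid : Fintype.card (Fin (n + 1) × Fin (n + 1)) = (n + 1) ^ 2 := by
    simp [Fintype.card_prod, sq]
  rw [hgrid, hR'card] at main
  rw [hcard]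
  exact main

lemma occ_single (s : Finset (ℕ × ℕ)) (hs : ∀ q ∈ s, q.1 ≤ 1 ∧ q.2 ≤ 1) {p : MeshPattern}
    (h : ofId 1 s hs ≤ p) :
    ∃ i, 1 ≤ i ∧ i ≤ p.len ∧
      ∀ jk ∈ s, ∀ a b : ℕ,
        (if jk.1 = 0 then a < i else i ≤ a ∧ a < p.len + 1) →
        (if jk.2 = 0 then b < p.perm i else p.perm i ≤ b ∧ b < p.len + 1) →
        (a, b) ∈ p.sh := by
  obtain ⟨η, occ⟩ := h
  set m := ofId 1 s hs with hm
  have hmlen : m.len = 1 := rfl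
  have hmem := occ.mem 1 le_rfl (by rw [hmlen])
  refine ⟨η 1, hmem.1, hmem.2, ?_⟩
  have hpos : m.pos 1 = 1 := by
    have h1 : m.perm (Function.invFun m.perm 1) = 1 := Function.invFun_eq ⟨1, rfl⟩
    have h1' : (if 1 ≤ Function.invFun m.perm 1 ∧ Function.invFun m.perm 1 ≤ 1 then
        Function.invFun m.perm 1 else 0) = 1 := h1
    show Function.invFun m.perm 1 = 1
    split_ifs at h1' <;> omega
  have hcol0 : colExt m p η 0 = 0 := by simp [colExt]
  have hcol1 : colExt m p η 1 = η 1 := by simp [colExt, hmlen]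
  have hcol2 : colExt m p η 2 = p.len + 1 := by simp [colExt, hmlen]
  have hval0 : valExt m p η 0 = 0 := by simp [valExt]
  have hval1 : valExt m p η 1 = p.perm (η 1) := by simp [valExt, hmlen, hpos]
  have hval2 : valExt m p η 2 = p.len + 1 := by simp [valExt, hmlen]
  rintro ⟨j, k⟩ hjk a b hA hB
  have hj := (hs _ hjk).1
  have hk := (hs _ hjk).2
  apply occ.shaded (j, k) hjk a b
  simp only at hj hk
  interval_cases j <;> interval_cases k <;>
    simp only [reduceIte, Nat.reduceEqDiff, if_true, if_false] at hA hB <;>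
    refine ⟨?_, ?_, ?_, ?_⟩ <;>
    simp only [Nat.reduceAdd, zero_add, hcol0, hcol1, hcol2, hval0, hval1, hval2] <;> omega

/-- The corner rectangles. -/
def cornerRect (c : ℕ) (n i v : ℕ) : Finset (ℕ × ℕ) :=
  if c = 0 then Finset.range i ×ˢ Finset.range v
  else if c = 1 then Finset.Icc i n ×ˢ Finset.range v
  else if c = 2 then Finset.range i ×ˢ Finset.Icc v n
  else Finset.Icc i n ×ˢ Finset.Icc v n

def cornerPat (c : ℕ) : MeshPattern :=
  if c = 0 then one00 else if c = 1 then one10 else if c = 2 then one01 else one11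

lemma cornerRect_mem {c n i v : ℕ} (hi : 1 ≤ i) (hin : i ≤ n) (hv : 1 ≤ v) (hvn : v ≤ n) :
    ∀ q ∈ cornerRect c n i v, q.1 ≤ n ∧ q.2 ≤ n := by
  rintro ⟨a, b⟩ hq
  unfold cornerRect at hq
  split_ifs at hq <;>
    simp only [Finset.mem_product, Finset.mem_range, Finset.mem_Icc] at hq <;> omega

lemma contains_corner {c n : ℕ} (hc : c ≤ 3) {p : MeshPattern} (hp : p.len = n)
    (h : cornerPat c ≤ p) :
    ∃ i v, (1 ≤ i ∧ i ≤ n) ∧ (1 ≤ v ∧ v ≤ n) ∧ p.perm i = v ∧ cornerRect c n i v ⊆ p.sh := by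
  have key : ∀ (s : Finset (ℕ × ℕ)) (hs : ∀ q ∈ s, q.1 ≤ 1 ∧ q.2 ≤ 1),
      ofId 1 s hs ≤ p →
      ∃ i, 1 ≤ i ∧ i ≤ n ∧
        ∀ jk ∈ s, ∀ a b : ℕ,
          (if jk.1 = 0 then a < i else i ≤ a ∧ a < n + 1) →
          (if jk.2 = 0 then b < p.perm i else p.perm i ≤ b ∧ b < n + 1) →
          (a, b) ∈ p.sh := by
    intro s hs h'
    obtain ⟨i, h1, h2, h3⟩ := occ_single s hs h'
    exact ⟨i, h1, hp ▸ h2, by rw [← hp]; exact h3⟩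
  interval_cases c
  · obtain ⟨i, h1, h2, h3⟩ := key {(0, 0)} (by decide) h
    have hpv := p.perm_mem i h1 (hp ▸ h2)
    refine ⟨i, p.perm i, ⟨h1, h2⟩, ⟨hpv.1, hp ▸ hpv.2⟩, rfl, ?_⟩
    rintro ⟨a, b⟩ hq
    simp [cornerRect] at hq
    exact h3 (0, 0) (by simp) a b (by simp [hq.1]) (by simp [hq.2])
  · obtain ⟨i, h1, h2, h3⟩ := key {(1, 0)} (by decide) h
    have hpv := p.perm_mem i h1 (hp ▸ h2)
    refine ⟨i, p.perm i, ⟨h1, h2⟩, ⟨hpv.1, hp ▸ hpv.2⟩, rfl, ?_⟩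
    rintro ⟨a, b⟩ hq
    simp [cornerRect] at hq
    exact h3 (1, 0) (by simp) a b (by simp; omega) (by simp [hq.2])
  · obtain ⟨i, h1, h2, h3⟩ := key {(0, 1)} (by decide) h
    have hpv := p.perm_mem i h1 (hp ▸ h2)
    refine ⟨i, p.perm i, ⟨h1, h2⟩, ⟨hpv.1, hp ▸ hpv.2⟩, rfl, ?_⟩
    rintro ⟨a, b⟩ hq
    simp [cornerRect] at hq
    exact h3 (0, 1) (by simp) a b (by simp [hq.1]) (by simp; omega)
  · obtain ⟨i, h1, h2, h3⟩ := key {(1, 1)} (by decide) h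
    have hpv := p.perm_mem i h1 (hp ▸ h2)
    refine ⟨i, p.perm i, ⟨h1, h2⟩, ⟨hpv.1, hp ▸ hpv.2⟩, rfl, ?_⟩
    rintro ⟨a, b⟩ hq
    simp [cornerRect] at hq
    exact h3 (1, 1) (by simp) a b (by simp; omega) (by simp; omega)

lemma sum_geo (K m : ℕ) (h : m ≤ K) :
    ∑ x ∈ Finset.Icc 1 m, 2 ^ (K - x) = 2 ^ K - 2 ^ (K - m) := by
  induction m with
  | zero => simp
  | succ m ih =>
    rw [Finset.sum_Icc_succ_top (by omega), ih (by omega)]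
    have h1 : K - m = (K - (m + 1)) + 1 := by omega
    have h2 : 2 ^ (K - m) = 2 * 2 ^ (K - (m + 1)) := by rw [h1, pow_succ]; ring
    have h3 : 2 ^ (K - m) ≤ 2 ^ K := Nat.pow_le_pow_right (by norm_num) (by omega)
    omega

lemma sum_geo_le (K m : ℕ) (h : m ≤ K) : ∑ x ∈ Finset.Icc 1 m, 2 ^ (K - x) ≤ 2 ^ K := by
  rw [sum_geo K m h]; exact Nat.sub_le _ _

lemma sum_reflect (f : ℕ → ℕ) (m : ℕ) :
    ∑ x ∈ Finset.Icc 1 m, f (m + 1 - x) = ∑ x ∈ Finset.Icc 1 m, f x := by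
  apply Finset.sum_nbij' (i := fun x => m + 1 - x) (j := fun x => m + 1 - x) <;>
    intros a ha <;> simp_all [Finset.mem_Icc] <;> omega

lemma base_sum (n M : ℕ) (hM : n * n + 2 * n ≤ M) :
    ∑ i ∈ Finset.Icc 1 n, ∑ v ∈ Finset.Icc 1 n, 2 ^ (M - i * v) ≤ 2 ^ (M + 1) := by
  have step1 : ∀ i ∈ Finset.Icc 1 n, ∑ v ∈ Finset.Icc 1 n, 2 ^ (M - i * v) ≤ 2 ^ (M + 1 - i) := by
    intro i hi
    rw [Finset.mem_Icc] at hi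
    refine le_trans (Finset.sum_le_sum ?_) (sum_geo_le (M + 1 - i) n (by omega))
    intro v hv
    rw [Finset.mem_Icc] at hv
    apply Nat.pow_le_pow_right (by norm_num)
    have hiv : i + v ≤ i * v + 1 := by
      obtain ⟨i', rfl⟩ := Nat.exists_eq_add_of_le hi.1
      obtain ⟨v', rfl⟩ := Nat.exists_eq_add_of_le hv.1
      ring_nf
      nlinarith
    have hivM : i * v ≤ n * n := Nat.mul_le_mul hi.2 hv.2
    omega
  refine le_trans (Finset.sum_le_sum step1) ?_
  have : ∀ i ∈ Finset.Icc 1 n, 2 ^ (M + 1 - i) = 2 ^ ((M + 1) - i) := fun i _ => rfl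
  exact sum_geo_le (M + 1) n (by omega)

lemma card_cornerRect (c n i v : ℕ) (hc : c ≤ 3) :
    (cornerRect c n i v).card =
      (if c = 0 ∨ c = 2 then i else n + 1 - i) * (if c = 0 ∨ c = 1 then v else n + 1 - v) := by
  interval_cases c <;> simp [cornerRect, Nat.card_Icc]

lemma corner_sum (c n : ℕ) (hc : c ≤ 3) :
    ∑ iv ∈ Finset.Icc 1 n ×ˢ Finset.Icc 1 n,
        n.factorial * 2 ^ ((n + 1) ^ 2 - (cornerRect c n iv.1 iv.2).card) ≤
      n.factorial * 2 ^ ((n + 1) ^ 2 + 1) := by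
  rw [← Finset.mul_sum]
  apply Nat.mul_le_mul_left
  rw [Finset.sum_product]
  have hM : n * n + 2 * n ≤ (n + 1) ^ 2 := by nlinarith
  have base := base_sum n ((n + 1) ^ 2) hM
  interval_cases c
  · simpa [card_cornerRect] using base
  · calc ∑ i ∈ Finset.Icc 1 n, ∑ v ∈ Finset.Icc 1 n,
          2 ^ ((n + 1) ^ 2 - (cornerRect 1 n i v).card)
        = ∑ i ∈ Finset.Icc 1 n, ∑ v ∈ Finset.Icc 1 n, 2 ^ ((n + 1) ^ 2 - (n + 1 - i) * v) := by
          simp [card_cornerRect]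
      _ = ∑ i ∈ Finset.Icc 1 n, ∑ v ∈ Finset.Icc 1 n, 2 ^ ((n + 1) ^ 2 - i * v) :=
          sum_reflect (fun i => ∑ v ∈ Finset.Icc 1 n, 2 ^ ((n + 1) ^ 2 - i * v)) n
      _ ≤ _ := base
  · calc ∑ i ∈ Finset.Icc 1 n, ∑ v ∈ Finset.Icc 1 n,
          2 ^ ((n + 1) ^ 2 - (cornerRect 2 n i v).card)
        = ∑ i ∈ Finset.Icc 1 n, ∑ v ∈ Finset.Icc 1 n, 2 ^ ((n + 1) ^ 2 - i * (n + 1 - v)) := by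
          simp [card_cornerRect]
      _ = ∑ i ∈ Finset.Icc 1 n, ∑ v ∈ Finset.Icc 1 n, 2 ^ ((n + 1) ^ 2 - i * v) :=
          Finset.sum_congr rfl fun i _ =>
            sum_reflect (fun v => 2 ^ ((n + 1) ^ 2 - i * v)) n
      _ ≤ _ := base
  · calc ∑ i ∈ Finset.Icc 1 n, ∑ v ∈ Finset.Icc 1 n,
          2 ^ ((n + 1) ^ 2 - (cornerRect 3 n i v).card)
        = ∑ i ∈ Finset.Icc 1 n, ∑ v ∈ Finset.Icc 1 n,
            2 ^ ((n + 1) ^ 2 - (n + 1 - i) * (n + 1 - v)) := by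
          simp [card_cornerRect]
      _ = ∑ i ∈ Finset.Icc 1 n, ∑ v ∈ Finset.Icc 1 n, 2 ^ ((n + 1) ^ 2 - i * (n + 1 - v)) :=
          sum_reflect (fun i => ∑ v ∈ Finset.Icc 1 n, 2 ^ ((n + 1) ^ 2 - i * (n + 1 - v))) n
      _ = ∑ i ∈ Finset.Icc 1 n, ∑ v ∈ Finset.Icc 1 n, 2 ^ ((n + 1) ^ 2 - i * v) :=
          Finset.sum_congr rfl fun i _ =>
            sum_reflect (fun v => 2 ^ ((n + 1) ^ 2 - i * v)) n
      _ ≤ _ := base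

lemma cover_bound (n : ℕ) (S : Set MeshPattern) (Rf : ℕ → ℕ → Finset (ℕ × ℕ))
    (hRmem : ∀ i v, 1 ≤ i → i ≤ n → 1 ≤ v → v ≤ n → ∀ q ∈ Rf i v, q.1 ≤ n ∧ q.2 ≤ n)
    (hcov : ∀ p ∈ S, p.len = n ∧ ∃ i v, (1 ≤ i ∧ i ≤ n) ∧ (1 ≤ v ∧ v ≤ n) ∧
      p.perm i = v ∧ Rf i v ⊆ p.sh) :
    n * S.ncard ≤ ∑ iv ∈ Finset.Icc 1 n ×ˢ Finset.Icc 1 n,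
      n.factorial * 2 ^ ((n + 1) ^ 2 - (Rf iv.1 iv.2).card) := by
  classical
  have hS : S.Finite := (finite_len n).subset fun p hp => (hcov p hp).1
  have hAfin : ∀ iv : ℕ × ℕ,
      {p : MeshPattern | p.len = n ∧ p.perm iv.1 = iv.2 ∧ Rf iv.1 iv.2 ⊆ p.sh}.Finite :=
    fun iv => (finite_len n).subset fun p hp => hp.1
  have hsub : hS.toFinset ⊆ (Finset.Icc 1 n ×ˢ Finset.Icc 1 n).biUnion
      (fun iv => (hAfin iv).toFinset) := by
    intro p hp
    rw [Set.Finite.mem_toFinset] at hp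
    obtain ⟨hpl, i, v, hi, hv, hpiv, hRs⟩ := hcov p hp
    refine Finset.mem_biUnion.mpr ⟨(i, v), ?_, ?_⟩
    · simp only [Finset.mem_product, Finset.mem_Icc]; omega
    · rw [Set.Finite.mem_toFinset]; exact ⟨hpl, hpiv, hRs⟩
  calc n * S.ncard = n * hS.toFinset.card := by rw [Set.ncard_eq_toFinset_card _ hS]
    _ ≤ n * ∑ iv ∈ Finset.Icc 1 n ×ˢ Finset.Icc 1 n, (hAfin iv).toFinset.card :=
        Nat.mul_le_mul_left n ((Finset.card_le_card hsub).trans Finset.card_biUnion_le)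
    _ = ∑ iv ∈ Finset.Icc 1 n ×ˢ Finset.Icc 1 n, n * (hAfin iv).toFinset.card :=
        Finset.mul_sum _ _ _
    _ ≤ _ := by
        apply Finset.sum_le_sum
        rintro ⟨i, v⟩ hiv
        simp only [Finset.mem_product, Finset.mem_Icc] at hiv
        rw [← Set.ncard_eq_toFinset_card _ (hAfin (i, v))]
        exact key_count n i v hiv.1.1 hiv.1.2 hiv.2.1 hiv.2.2 _
          (hRmem i v hiv.1.1 hiv.1.2 hiv.2.1 hiv.2.2)

lemma n_Ncount_le (n : ℕ) : n * Ncount n ≤ 8 * Tcount n := by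
  have corner_bd : ∀ c, c ≤ 3 → n * {p : MeshPattern | p.len = n ∧ cornerPat c ≤ p}.ncard ≤
      n.factorial * 2 ^ ((n + 1) ^ 2 + 1) := by
    intro c hc
    refine le_trans (cover_bound n _ (cornerRect c n) ?_ ?_) (corner_sum c n hc)
    · intro i v hi hin hv hvn q hq; exact cornerRect_mem hi hin hv hvn q hq
    · rintro p ⟨hpl, hctn⟩; exact ⟨hpl, contains_corner hc hpl hctn⟩
  have hsplit : {p : MeshPattern | p.len = n ∧ ContainsShadedSingle p} =
      ({p : MeshPattern | p.len = n ∧ cornerPat 0 ≤ p} ∪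
        {p : MeshPattern | p.len = n ∧ cornerPat 1 ≤ p}) ∪
      ({p : MeshPattern | p.len = n ∧ cornerPat 2 ≤ p} ∪
        {p : MeshPattern | p.len = n ∧ cornerPat 3 ≤ p}) := by
    ext p
    simp only [Set.mem_setOf_eq, Set.mem_union, ContainsShadedSingle, cornerPat]
    norm_num
    tauto
  have hN : Ncount n ≤ {p : MeshPattern | p.len = n ∧ cornerPat 0 ≤ p}.ncard +
      {p : MeshPattern | p.len = n ∧ cornerPat 1 ≤ p}.ncard +
      ({p : MeshPattern | p.len = n ∧ cornerPat 2 ≤ p}.ncard +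
        {p : MeshPattern | p.len = n ∧ cornerPat 3 ≤ p}.ncard) := by
    rw [Ncount, hsplit]
    exact (Set.ncard_union_le _ _).trans
      (Nat.add_le_add (Set.ncard_union_le _ _) (Set.ncard_union_le _ _))
  have h0 := corner_bd 0 (by norm_num)
  have h1 := corner_bd 1 (by norm_num)
  have h2 := corner_bd 2 (by norm_num)
  have h3 := corner_bd 3 (by norm_num)
  have hmul : n * Ncount n ≤ 4 * (n.factorial * 2 ^ ((n + 1) ^ 2 + 1)) := by
    calc n * Ncount n ≤ n * ({p : MeshPattern | p.len = n ∧ cornerPat 0 ≤ p}.ncard +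
        {p : MeshPattern | p.len = n ∧ cornerPat 1 ≤ p}.ncard +
        ({p : MeshPattern | p.len = n ∧ cornerPat 2 ≤ p}.ncard +
          {p : MeshPattern | p.len = n ∧ cornerPat 3 ≤ p}.ncard)) := Nat.mul_le_mul_left n hN
      _ ≤ 4 * (n.factorial * 2 ^ ((n + 1) ^ 2 + 1)) := by
          rw [Nat.mul_add, Nat.mul_add, Nat.mul_add]
          omega
  calc n * Ncount n ≤ 4 * (n.factorial * 2 ^ ((n + 1) ^ 2 + 1)) := hmul
    _ = 8 * Tcount n := by rw [Tcount, pow_succ]; ring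

end Aux

/-- The proportion of mesh patterns of length `n` containing one of the four shaded
singleton patterns is at most `8 / n`; in particular it tends to `0`. -/
theorem proportion_containing_shaded_single :
    (∀ n : ℕ, 1 ≤ n → (Ncount n : ℝ) / (Tcount n : ℝ) ≤ 8 / (n : ℝ)) ∧
    Filter.Tendsto (fun n => (Ncount n : ℝ) / (Tcount n : ℝ)) Filter.atTop (nhds 0) := by
  have hmain : ∀ n : ℕ, 1 ≤ n → (Ncount n : ℝ) / (Tcount n : ℝ) ≤ 8 / (n : ℝ) := by
    intro n hn
    have hT : (0 : ℝ) < (Tcount n : ℝ) := by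
      have : 0 < Tcount n := by
        rw [Tcount]
        positivity
      exact_mod_cast this
    have hn' : (0 : ℝ) < (n : ℝ) := by exact_mod_cast hn
    rw [div_le_div_iff₀ hT hn']
    have h := n_Ncount_le n
    calc (Ncount n : ℝ) * (n : ℝ) = ((n * Ncount n : ℕ) : ℝ) := by push_cast; ring
      _ ≤ ((8 * Tcount n : ℕ) : ℝ) := by exact_mod_cast h
      _ = 8 * (Tcount n : ℝ) := by push_cast; ring
  refine ⟨hmain, ?_⟩
  apply tendsto_of_tendsto_of_tendsto_of_le_of_le' tendsto_const_nhds
    (tendsto_const_div_atTop_nhds_zero_nat 8)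
  · filter_upwards with n using div_nonneg (Nat.cast_nonneg _) (Nat.cast_nonneg _)
  · filter_upwards [Filter.eventually_ge_atTop 1] with n hn using hmain n hn

end MeshPattern
end
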